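/- arXiv:2211.06638 — 11 statements merged into one kernel-verified Lean document; each statement's English description precedes it below -/
import Mathlib

section
/- Let K be a field of characteristic ≠ 2, let A and B be commutative associative unital K-algebras with B finite-dimensional over K, and let [·,·] be an anticommutative bracket on the tensor product algebra A ⊗ B satisfying identity (★). Then there exist a finite index set I and brackets f_i on A and g_i on B (i ∈ I) such that: (1) [a⊗b, a'⊗b'] = Σ_{i∈I} f_i(a,a') ⊗ g_i(b,b') for all a,a' ∈ A, b,b' ∈ B; (2) every f_i satisfies identity (★) on A and every g_i satisfies identity (★) on B; (3) for each i ∈ I, either f_i is anticommutative and g_i is symmetric, or f_i is symmetric and g_i is anticommutative; and (4) Σ_{i∈I} (f_i(a,a'')a' − f_i(a',a'')a) ⊗ (g_i(b,b'')b' − g_i(b',b'')b) = 0 for all a,a',a'' ∈ A and b,b',b'' ∈ B. -/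
open scoped TensorProduct

section Aux
variable {K : Type*} [Field K] {A : Type*} [CommRing A] [Algebra K A]
variable {W : Type*} [AddCommGroup W] [Module K W]

/-- contraction with a dual functional on the `A` side -/
noncomputable def phiT (φ : Module.Dual K A) : (A ⊗[K] W) →ₗ[K] W :=
  (TensorProduct.lid K W).toLinearMap ∘ₗ LinearMap.rTensor W φ

@[simp] lemma phiT_tmul (φ : Module.Dual K A) (a : A) (w : W) :
    phiT φ (a ⊗ₜ[K] w) = φ a • w := by
  simp [phiT]

/-- coordinate on the `W` side -/
noncomputable def coordW {ι : Type*} (e : Module.Basis ι K W) (l : ι) : (A ⊗[K] W) →ₗ[K] A :=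
  (TensorProduct.rid K A).toLinearMap ∘ₗ LinearMap.lTensor A (e.coord l)

@[simp] lemma coordW_tmul {ι : Type*} (e : Module.Basis ι K W) (l : ι) (a : A) (w : W) :
    coordW e l (a ⊗ₜ[K] w) = e.coord l w • a := by
  simp [coordW]

lemma sum_coordW {ι : Type*} [Fintype ι] (e : Module.Basis ι K W) (z : A ⊗[K] W) :
    ∑ l, coordW e l z ⊗ₜ[K] e l = z := by
  induction z using TensorProduct.induction_on with
  | zero => simp
  | tmul a w =>
      simp only [coordW_tmul, TensorProduct.smul_tmul]
      rw [← TensorProduct.tmul_sum]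
      congr 1
      simpa using e.sum_repr w
  | add x y hx hy => simp [map_add, TensorProduct.add_tmul, Finset.sum_add_distrib, hx, hy]

lemma phiT_coordW {ι : Type*} (e : Module.Basis ι K W) (l : ι) (φ : Module.Dual K A)
    (z : A ⊗[K] W) : φ (coordW e l z) = e.coord l (phiT φ z) := by
  induction z using TensorProduct.induction_on with
  | zero => simp
  | tmul a w => simp [mul_comm]
  | add x y hx hy => simp [map_add, hx, hy]

lemma eq_zero_of_phiT {ι : Type*} [Fintype ι] (e : Module.Basis ι K W) (z : A ⊗[K] W)
    (h : ∀ φ : Module.Dual K A, phiT φ z = 0) : z = 0 := by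
  have hc : ∀ l, coordW e l z = 0 := by
    intro l
    rw [← Module.forall_dual_apply_eq_zero_iff K]
    intro φ
    rw [phiT_coordW, h φ, map_zero]
  rw [← sum_coordW e z]
  simp [hc]

lemma hom_expand {V : Type*} [AddCommGroup V] [Module K V]
    {ιV ιW : Type*} [Fintype ιV] [Fintype ιW] [DecidableEq ιV]
    (v : Module.Basis ιV K V) (e : Module.Basis ιW K W) (h : V →ₗ[K] W) :
    h = ∑ k, ∑ l, e.coord l (h (v k)) • ((v.coord k).smulRight (e l)) := by
  refine v.ext fun k' => ?_
  simp only [LinearMap.sum_apply, LinearMap.smul_apply, LinearMap.smulRight_apply,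
    Module.Basis.coord_apply, Module.Basis.repr_self]
  rw [Finset.sum_eq_single k']
  · simp [Finsupp.single_eq_same]
  · intro k _ hk
    simp [Finsupp.single_eq_of_ne hk]
  · intro hk; exact (hk (Finset.mem_univ k')).elim

/-- Main decomposition lemma. -/
lemma decomp_main {V : Type*} [AddCommGroup V] [Module K V]
    {ιV ιW : Type*} [Fintype ιV] [Fintype ιW] [DecidableEq ιV]
    (v : Module.Basis ιV K V) (e : Module.Basis ιW K W) {r : ℕ}
    (w : Fin r → (V →ₗ[K] W)) (δ : Fin r → (V →ₗ[K] W) →ₗ[K] K)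
    (Ψ : V →ₗ[K] A ⊗[K] W)
    (hΨ : ∀ φ : Module.Dual K A,
      ∑ j, δ j ((phiT φ) ∘ₗ Ψ) • w j = (phiT φ) ∘ₗ Ψ) (x : V) :
    Ψ x = ∑ j, (∑ k, ∑ l, δ j ((v.coord k).smulRight (e l)) • coordW e l (Ψ (v k)))
      ⊗ₜ[K] w j x := by
  have key : ∀ φ : Module.Dual K A,
      phiT φ (Ψ x - ∑ j, (∑ k, ∑ l, δ j ((v.coord k).smulRight (e l)) •
        coordW e l (Ψ (v k))) ⊗ₜ[K] w j x) = 0 := by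
    intro φ
    have hκ : ∀ j, φ (∑ k, ∑ l, δ j ((v.coord k).smulRight (e l)) • coordW e l (Ψ (v k)))
        = δ j ((phiT φ) ∘ₗ Ψ) := by
      intro j
      conv_rhs => rw [hom_expand v e ((phiT φ) ∘ₗ Ψ)]
      rw [map_sum]
      simp only [map_sum, map_smul, smul_eq_mul, LinearMap.coe_comp, Function.comp_apply]
      refine Finset.sum_congr rfl fun k _ => ?_
      refine Finset.sum_congr rfl fun l _ => ?_
      rw [phiT_coordW]
      ring
    rw [map_sub, map_sum]
    simp only [phiT_tmul, hκ]
    have := congrArg (fun (h : V →ₗ[K] W) => h x) (hΨ φ)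
    simp only [LinearMap.sum_apply, LinearMap.smul_apply, LinearMap.coe_comp,
      Function.comp_apply] at this
    rw [← this]
    simp
  have := eq_zero_of_phiT e _ key
  exact sub_eq_zero.mp this

lemma reconstruct {E : Type*} [AddCommGroup E] [Module K E] (M : Submodule K E)
    {r : ℕ} (bM : Module.Basis (Fin r) K M) (π : E →ₗ[K] M) (hπ : ∀ m : M, π (m : E) = m)
    (h : E) (hh : h ∈ M) :
    ∑ j, (bM.coord j (π h)) • (bM j : E) = h := by
  have h1 : π h = ⟨h, hh⟩ := hπ ⟨h, hh⟩
  rw [h1]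
  have := bM.sum_repr ⟨h, hh⟩
  calc ∑ j, (bM.coord j ⟨h, hh⟩) • (bM j : E)
      = ((∑ j, bM.repr ⟨h, hh⟩ j • bM j : M) : E) := by
        simp [Module.Basis.coord_apply]
        simpa only [Submodule.coe_sum, Submodule.coe_smul] using congrArg Subtype.val this
    _ = h := by rw [this]

end Aux

section AuxMul
variable {K : Type*} [Field K] {A : Type*} [CommRing A] [Algebra K A]
variable {B : Type*} [CommRing B] [Algebra K B]

lemma phiT_mul (φ : Module.Dual K A) (z : A ⊗[K] B) (b : B) :
    phiT φ (z * ((1:A) ⊗ₜ[K] b)) = phiT φ z * b := by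
  induction z using TensorProduct.induction_on with
  | zero => simp
  | tmul x y =>
      rw [Algebra.TensorProduct.tmul_mul_tmul]
      simp [smul_mul_assoc]
  | add x y hx hy => rw [add_mul, map_add, map_add, add_mul, hx, hy]

lemma coordW_mul {ι : Type*} (e : Module.Basis ι K B) (l : ι) (z : A ⊗[K] B) (x : A) :
    coordW e l (z * (x ⊗ₜ[K] (1:B))) = coordW e l z * x := by
  induction z using TensorProduct.induction_on with
  | zero => simp
  | tmul a b =>
      rw [Algebra.TensorProduct.tmul_mul_tmul, mul_one]
      simp [smul_mul_assoc]
  | add u v hu hv => rw [add_mul, map_add, map_add, add_mul, hu, hv]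

end AuxMul

section Main
variable {K : Type*} [Field K] {A B : Type*} [CommRing A] [Algebra K A]
  [CommRing B] [Algebra K B]

/-- restriction of the bracket to `A ⊗ 1 × A ⊗ 1` -/
noncomputable def Pb (L : (A ⊗[K] B) →ₗ[K] (A ⊗[K] B) →ₗ[K] (A ⊗[K] B)) :
    A →ₗ[K] A →ₗ[K] A ⊗[K] B :=
  LinearMap.mk₂ K (fun a a' => L (a ⊗ₜ[K] (1:B)) (a' ⊗ₜ[K] (1:B)))
    (fun a a' c => by simp only [TensorProduct.add_tmul, map_add, LinearMap.add_apply])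
    (fun c a a' => by simp only [← TensorProduct.smul_tmul', map_smul, LinearMap.smul_apply])
    (fun a a' c => by simp only [TensorProduct.add_tmul, map_add])
    (fun c a a' => by simp only [← TensorProduct.smul_tmul', map_smul])

@[simp] lemma Pb_apply (L : (A ⊗[K] B) →ₗ[K] (A ⊗[K] B) →ₗ[K] (A ⊗[K] B)) (a a' : A) :
    Pb L a a' = L (a ⊗ₜ[K] (1:B)) (a' ⊗ₜ[K] (1:B)) := rfl

noncomputable def Qb (L : (A ⊗[K] B) →ₗ[K] (A ⊗[K] B) →ₗ[K] (A ⊗[K] B)) :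
    A →ₗ[K] B →ₗ[K] A ⊗[K] B :=
  LinearMap.mk₂ K (fun a b => L (a ⊗ₜ[K] (1:B)) ((1:A) ⊗ₜ[K] b))
    (fun a a' c => by simp only [TensorProduct.add_tmul, map_add, LinearMap.add_apply])
    (fun c a b => by simp only [← TensorProduct.smul_tmul', map_smul, LinearMap.smul_apply])
    (fun a b b' => by simp only [TensorProduct.tmul_add, map_add])
    (fun c a b => by simp only [TensorProduct.tmul_smul, map_smul])

@[simp] lemma Qb_apply (L : (A ⊗[K] B) →ₗ[K] (A ⊗[K] B) →ₗ[K] (A ⊗[K] B)) (a : A) (b : B) :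
    Qb L a b = L (a ⊗ₜ[K] (1:B)) ((1:A) ⊗ₜ[K] b) := rfl

noncomputable def Sb (L : (A ⊗[K] B) →ₗ[K] (A ⊗[K] B) →ₗ[K] (A ⊗[K] B)) :
    B →ₗ[K] B →ₗ[K] A ⊗[K] B :=
  LinearMap.mk₂ K (fun b b' => L ((1:A) ⊗ₜ[K] b) ((1:A) ⊗ₜ[K] b'))
    (fun b b' c => by simp only [TensorProduct.tmul_add, map_add, LinearMap.add_apply])
    (fun c b b' => by simp only [TensorProduct.tmul_smul, map_smul, LinearMap.smul_apply])
    (fun b b' c => by simp only [TensorProduct.tmul_add, map_add])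
    (fun c b b' => by simp only [TensorProduct.tmul_smul, map_smul])

@[simp] lemma Sb_apply (L : (A ⊗[K] B) →ₗ[K] (A ⊗[K] B) →ₗ[K] (A ⊗[K] B)) (b b' : B) :
    Sb L b b' = L ((1:A) ⊗ₜ[K] b) ((1:A) ⊗ₜ[K] b') := rfl

variable (K B) in
/-- generalized derivations of `B` -/
def Dgd : Submodule K (B →ₗ[K] B) where
  carrier := {d | ∀ x y : B, d (x*y) = d x * y + d y * x - d 1 * (x*y)}
  add_mem' := by
    intro d1 d2 h1 h2
    intro x y
    simp only [LinearMap.add_apply, h1 x y, h2 x y]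
    ring
  zero_mem' := by intro x y; simp
  smul_mem' := by
    intro c d h x y
    simp only [LinearMap.smul_apply, h x y, smul_sub, smul_add, smul_mul_assoc]

variable (K B) in
/-- antisymmetric brackets on `B` satisfying (★), curried through `B ⊗ B` -/
def Wneg : Submodule K (B ⊗[K] B →ₗ[K] B) where
  carrier := {h | (∀ x y c : B, h ((x*y) ⊗ₜ[K] c)
      = h (x ⊗ₜ[K] c) * y + h (y ⊗ₜ[K] c) * x - h ((1:B) ⊗ₜ[K] c) * (x*y))
    ∧ (∀ x y : B, h (x ⊗ₜ[K] y) = - h (y ⊗ₜ[K] x))}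
  add_mem' := by
    rintro h1 h2 ⟨ha1, ha2⟩ ⟨hb1, hb2⟩
    constructor
    · intro x y c
      simp only [LinearMap.add_apply, ha1 x y c, hb1 x y c]
      ring
    · intro x y
      simp only [LinearMap.add_apply, ha2 x y, hb2 x y]
      ring
  zero_mem' := by constructor <;> intros <;> simp
  smul_mem' := by
    rintro c h ⟨h1, h2⟩
    constructor
    · intro x y cc
      simp only [LinearMap.smul_apply, h1 x y cc, smul_sub, smul_add, smul_mul_assoc]
    · intro x y
      simp only [LinearMap.smul_apply, h2 x y, smul_neg]

variable (K B) in
noncomputable def eB [FiniteDimensional K B] : Module.Basis (Fin (Module.finrank K B)) K B :=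
  Module.finBasis K B

variable (K B) in
noncomputable def dbasis [FiniteDimensional K B] :
    Module.Basis (Fin (Module.finrank K ↥(Dgd K B))) K ↥(Dgd K B) :=
  haveI := Module.Free.of_divisionRing K ↥(Dgd K B); Module.finBasis K ↥(Dgd K B)

variable (K B) in
noncomputable def projD [FiniteDimensional K B] : (B →ₗ[K] B) →ₗ[K] ↥(Dgd K B) :=
  (Dgd K B).linearProjOfIsCompl (Submodule.exists_isCompl (Dgd K B)).choose
    (Submodule.exists_isCompl (Dgd K B)).choose_spec

lemma projD_left [FiniteDimensional K B] (m : ↥(Dgd K B)) : projD K B (m : B →ₗ[K] B) = m :=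
  Submodule.linearProjOfIsCompl_apply_left _ m

variable (K B) in
noncomputable def δD [FiniteDimensional K B] (j : Fin (Module.finrank K ↥(Dgd K B))) :
    (B →ₗ[K] B) →ₗ[K] K :=
  ((dbasis K B).coord j) ∘ₗ projD K B

variable (K B) in
noncomputable def wbasis [FiniteDimensional K B] :
    Module.Basis (Fin (Module.finrank K ↥(Wneg K B))) K ↥(Wneg K B) :=
  haveI := Module.Free.of_divisionRing K ↥(Wneg K B); Module.finBasis K ↥(Wneg K B)

variable (K B) in
noncomputable def projW [FiniteDimensional K B] : (B ⊗[K] B →ₗ[K] B) →ₗ[K] ↥(Wneg K B) :=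
  (Wneg K B).linearProjOfIsCompl (Submodule.exists_isCompl (Wneg K B)).choose
    (Submodule.exists_isCompl (Wneg K B)).choose_spec

lemma projW_left [FiniteDimensional K B] (m : ↥(Wneg K B)) :
    projW K B (m : B ⊗[K] B →ₗ[K] B) = m :=
  Submodule.linearProjOfIsCompl_apply_left _ m

variable (K B) in
noncomputable def δW [FiniteDimensional K B] (t : Fin (Module.finrank K ↥(Wneg K B))) :
    (B ⊗[K] B →ₗ[K] B) →ₗ[K] K :=
  ((wbasis K B).coord t) ∘ₗ projW K B

end Main
set_option linter.unusedSectionVars false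
section Main2
variable {K : Type*} [Field K] {A B : Type*} [CommRing A] [Algebra K A]
  [CommRing B] [Algebra K B]

lemma mem_Dgd (d : B →ₗ[K] B) :
    d ∈ Dgd K B ↔ ∀ x y : B, d (x*y) = d x * y + d y * x - d 1 * (x*y) := Iff.rfl

lemma mem_Wneg (h : B ⊗[K] B →ₗ[K] B) :
    h ∈ Wneg K B ↔ (∀ x y c : B, h ((x*y) ⊗ₜ[K] c)
      = h (x ⊗ₜ[K] c) * y + h (y ⊗ₜ[K] c) * x - h ((1:B) ⊗ₜ[K] c) * (x*y))
    ∧ (∀ x y : B, h (x ⊗ₜ[K] y) = - h (y ⊗ₜ[K] x)) := Iff.rfl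

variable (L : (A ⊗[K] B) →ₗ[K] (A ⊗[K] B) →ₗ[K] (A ⊗[K] B))

lemma Lr (hanti : ∀ z w : A ⊗[K] B, L z w = - L w z)
    (hstar : ∀ z w v : A ⊗[K] B, L (z * w) v = L z v * w + L w v * z - L 1 v * (z * w))
    (v z w : A ⊗[K] B) :
    L v (z * w) = L v z * w + L v w * z - L v 1 * (z * w) := by
  rw [hanti v (z*w), hstar z w v, hanti z v, hanti w v, hanti 1 v]
  ring

variable [FiniteDimensional K B]

noncomputable def qmap (j : Fin (Module.finrank K ↥(Dgd K B))) : A →ₗ[K] A :=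
  ∑ k, ∑ l, (δD K B j) (((eB K B).coord k).smulRight (eB K B l)) •
    ((coordW (eB K B) l) ∘ₗ (Qb L).flip (eB K B k))

lemma qmap_apply (j : Fin (Module.finrank K ↥(Dgd K B))) (a : A) :
    qmap L j a = ∑ k, ∑ l, (δD K B j) (((eB K B).coord k).smulRight (eB K B l)) •
      coordW (eB K B) l (Qb L a (eB K B k)) := by
  simp [qmap, LinearMap.sum_apply, LinearMap.smul_apply]

noncomputable def kapS (t : Fin (Module.finrank K ↥(Wneg K B))) : A :=
  ∑ k : Fin (Module.finrank K B) × Fin (Module.finrank K B), ∑ l,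
    δW K B t ((((eB K B).tensorProduct (eB K B)).coord k).smulRight (eB K B l)) •
      coordW (eB K B) l (TensorProduct.lift (Sb L) (((eB K B).tensorProduct (eB K B)) k))

noncomputable def pmap (l : Fin (Module.finrank K B)) : A →ₗ[K] A →ₗ[K] A :=
  (Pb L).compr₂ (coordW (eB K B) l)

@[simp] lemma pmap_apply (l : Fin (Module.finrank K B)) (a a' : A) :
    pmap L l a a' = coordW (eB K B) l (L (a ⊗ₜ[K] (1:B)) (a' ⊗ₜ[K] (1:B))) := rfl

lemma Qb_gdB (hanti : ∀ z w : A ⊗[K] B, L z w = - L w z)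
    (hstar : ∀ z w v : A ⊗[K] B, L (z * w) v = L z v * w + L w v * z - L 1 v * (z * w))
    (a : A) (x y : B) :
    Qb L a (x*y) = Qb L a x * ((1:A) ⊗ₜ[K] y) + Qb L a y * ((1:A) ⊗ₜ[K] x)
      - Qb L a 1 * ((1:A) ⊗ₜ[K] (x*y)) := by
  have h := Lr L hanti hstar (a ⊗ₜ[K] (1:B)) ((1:A) ⊗ₜ[K] x) ((1:A) ⊗ₜ[K] y)
  rw [Algebra.TensorProduct.tmul_mul_tmul, one_mul] at h
  rw [Algebra.TensorProduct.one_def] at h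
  simpa using h

lemma qdec (hanti : ∀ z w : A ⊗[K] B, L z w = - L w z)
    (hstar : ∀ z w v : A ⊗[K] B, L (z * w) v = L z v * w + L w v * z - L 1 v * (z * w))
    (a : A) (b : B) :
    Qb L a b = ∑ j, qmap L j a ⊗ₜ[K] ((dbasis K B j : B →ₗ[K] B) b) := by
  have hmem : ∀ φ : Module.Dual K A, phiT φ ∘ₗ Qb L a ∈ Dgd K B := by
    intro φ
    rw [mem_Dgd]
    intro x y
    simp only [LinearMap.coe_comp, Function.comp_apply]
    rw [Qb_gdB L hanti hstar a x y, map_sub, map_add, phiT_mul, phiT_mul, phiT_mul]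
  have hrec : ∀ φ : Module.Dual K A,
      ∑ j, δD K B j (phiT φ ∘ₗ Qb L a) • ((dbasis K B j : B →ₗ[K] B)) = phiT φ ∘ₗ Qb L a := by
    intro φ
    have := reconstruct (Dgd K B) (dbasis K B) (projD K B) projD_left _ (hmem φ)
    simpa [δD] using this
  have h := decomp_main (eB K B) (eB K B) (fun j => (dbasis K B j : B →ₗ[K] B))
    (δD K B) (Qb L a) hrec b
  rw [h]
  refine Finset.sum_congr rfl fun j _ => ?_
  rw [qmap_apply]

lemma sdec (hanti : ∀ z w : A ⊗[K] B, L z w = - L w z)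
    (hstar : ∀ z w v : A ⊗[K] B, L (z * w) v = L z v * w + L w v * z - L 1 v * (z * w))
    (b b' : B) :
    Sb L b b' = ∑ t, kapS L t ⊗ₜ[K] ((wbasis K B t : B ⊗[K] B →ₗ[K] B) (b ⊗ₜ[K] b')) := by
  have hmem : ∀ φ : Module.Dual K A, phiT φ ∘ₗ TensorProduct.lift (Sb L) ∈ Wneg K B := by
    intro φ
    rw [mem_Wneg]
    constructor
    · intro x y c
      simp only [LinearMap.coe_comp, Function.comp_apply, TensorProduct.lift.tmul, Sb_apply]
      have h := hstar ((1:A) ⊗ₜ[K] x) ((1:A) ⊗ₜ[K] y) ((1:A) ⊗ₜ[K] c)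
      rw [Algebra.TensorProduct.tmul_mul_tmul, one_mul] at h
      rw [Algebra.TensorProduct.one_def] at h
      rw [h, map_sub, map_add, phiT_mul, phiT_mul, phiT_mul]
    · intro x y
      simp only [LinearMap.coe_comp, Function.comp_apply, TensorProduct.lift.tmul, Sb_apply]
      rw [hanti, map_neg]
  have hrec : ∀ φ : Module.Dual K A,
      ∑ t, δW K B t (phiT φ ∘ₗ TensorProduct.lift (Sb L)) •
        ((wbasis K B t : B ⊗[K] B →ₗ[K] B)) = phiT φ ∘ₗ TensorProduct.lift (Sb L) := by
    intro φ
    have := reconstruct (Wneg K B) (wbasis K B) (projW K B) projW_left _ (hmem φ)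
    simpa [δW] using this
  have h := decomp_main ((eB K B).tensorProduct (eB K B)) (eB K B)
    (fun t => (wbasis K B t : B ⊗[K] B →ₗ[K] B)) (δW K B)
    (TensorProduct.lift (Sb L)) hrec (b ⊗ₜ[K] b')
  rw [TensorProduct.lift.tmul] at h
  rw [h]
  rfl

end Main2
section Main3
variable {K : Type*} [Field K] {A B : Type*} [CommRing A] [Algebra K A]
  [CommRing B] [Algebra K B]
variable (L : (A ⊗[K] B) →ₗ[K] (A ⊗[K] B) →ₗ[K] (A ⊗[K] B))
variable [FiniteDimensional K B]

noncomputable def M1 (j : Fin (Module.finrank K ↥(Dgd K B))) : A →ₗ[K] A →ₗ[K] A :=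
  (LinearMap.mul K A).compl₁₂ (qmap L j) LinearMap.id

@[simp] lemma M1_apply (j) (a a' : A) : M1 L j a a' = qmap L j a * a' := rfl

noncomputable def f2a (j : Fin (Module.finrank K ↥(Dgd K B))) : A →ₗ[K] A →ₗ[K] A :=
  ((2:K)⁻¹) • (M1 L j + (M1 L j).flip)

noncomputable def f2b (j : Fin (Module.finrank K ↥(Dgd K B))) : A →ₗ[K] A →ₗ[K] A :=
  ((2:K)⁻¹) • (M1 L j - (M1 L j).flip)

noncomputable def f2c (j : Fin (Module.finrank K ↥(Dgd K B))) : A →ₗ[K] A →ₗ[K] A :=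
  (M1 L j).flip - M1 L j

noncomputable def f3 (t : Fin (Module.finrank K ↥(Wneg K B))) : A →ₗ[K] A →ₗ[K] A :=
  (LinearMap.mul K A).compr₂ (LinearMap.mulLeft K (kapS L t))

@[simp] lemma f2a_apply (j) (a a' : A) :
    f2a L j a a' = ((2:K)⁻¹) • (qmap L j a * a' + qmap L j a' * a) := rfl
@[simp] lemma f2b_apply (j) (a a' : A) :
    f2b L j a a' = ((2:K)⁻¹) • (qmap L j a * a' - qmap L j a' * a) := rfl
@[simp] lemma f2c_apply (j) (a a' : A) :
    f2c L j a a' = qmap L j a' * a - qmap L j a * a' := rfl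
@[simp] lemma f3_apply (t) (a a' : A) : f3 L t a a' = kapS L t * (a * a') := rfl

variable (K B) in
noncomputable def g1 (l : Fin (Module.finrank K B)) : B →ₗ[K] B →ₗ[K] B :=
  (LinearMap.mul K B).compr₂ (LinearMap.mulLeft K (eB K B l))

variable (K B) in
noncomputable def DD (j : Fin (Module.finrank K ↥(Dgd K B))) : B →ₗ[K] B →ₗ[K] B :=
  (LinearMap.mul K B).compl₁₂ (dbasis K B j : B →ₗ[K] B) LinearMap.id

variable (K B) in
noncomputable def g2a (j : Fin (Module.finrank K ↥(Dgd K B))) : B →ₗ[K] B →ₗ[K] B :=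
  (DD K B j).flip - DD K B j

variable (K B) in
noncomputable def g2b (j : Fin (Module.finrank K ↥(Dgd K B))) : B →ₗ[K] B →ₗ[K] B :=
  (DD K B j).flip + DD K B j

variable (K B) in
noncomputable def g2c (j : Fin (Module.finrank K ↥(Dgd K B))) : B →ₗ[K] B →ₗ[K] B :=
  (LinearMap.mul K B).compr₂ (LinearMap.mulLeft K ((dbasis K B j : B →ₗ[K] B) 1))

variable (K B) in
noncomputable def g3 (t : Fin (Module.finrank K ↥(Wneg K B))) : B →ₗ[K] B →ₗ[K] B :=
  TensorProduct.curry (wbasis K B t : B ⊗[K] B →ₗ[K] B)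
  - (LinearMap.mul K B).compl₁₂ ((wbasis K B t : B ⊗[K] B →ₗ[K] B) ∘ₗ
      ((TensorProduct.mk K B B).flip 1)) LinearMap.id
  - ((LinearMap.mul K B).compl₁₂ ((wbasis K B t : B ⊗[K] B →ₗ[K] B) ∘ₗ
      (TensorProduct.mk K B B 1)) LinearMap.id).flip

@[simp] lemma g1_apply (l) (b b' : B) : g1 K B l b b' = eB K B l * (b * b') := rfl
@[simp] lemma g2a_apply (j) (b b' : B) :
    g2a K B j b b' = (dbasis K B j : B →ₗ[K] B) b' * b - (dbasis K B j : B →ₗ[K] B) b * b' := rfl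
@[simp] lemma g2b_apply (j) (b b' : B) :
    g2b K B j b b' = (dbasis K B j : B →ₗ[K] B) b' * b + (dbasis K B j : B →ₗ[K] B) b * b' := rfl
@[simp] lemma g2c_apply (j) (b b' : B) :
    g2c K B j b b' = (dbasis K B j : B →ₗ[K] B) 1 * (b * b') := rfl
@[simp] lemma g3_apply (t) (b b' : B) :
    g3 K B t b b' = (wbasis K B t : B ⊗[K] B →ₗ[K] B) (b ⊗ₜ[K] b')
      - (wbasis K B t : B ⊗[K] B →ₗ[K] B) (b ⊗ₜ[K] (1:B)) * b'
      - (wbasis K B t : B ⊗[K] B →ₗ[K] B) ((1:B) ⊗ₜ[K] b') * b := rfl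

lemma dd_gd (j) (x y : B) :
    (dbasis K B j : B →ₗ[K] B) (x*y) = (dbasis K B j : B →ₗ[K] B) x * y
      + (dbasis K B j : B →ₗ[K] B) y * x - (dbasis K B j : B →ₗ[K] B) 1 * (x*y) :=
  ((mem_Dgd _).mp (SetLike.coe_mem _)) x y

lemma ww_star (t) (x y c : B) :
    (wbasis K B t : B ⊗[K] B →ₗ[K] B) ((x*y) ⊗ₜ[K] c)
      = (wbasis K B t : B ⊗[K] B →ₗ[K] B) (x ⊗ₜ[K] c) * y
      + (wbasis K B t : B ⊗[K] B →ₗ[K] B) (y ⊗ₜ[K] c) * x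
      - (wbasis K B t : B ⊗[K] B →ₗ[K] B) ((1:B) ⊗ₜ[K] c) * (x*y) :=
  ((mem_Wneg _).mp (SetLike.coe_mem _)).1 x y c

lemma ww_anti (t) (x y : B) :
    (wbasis K B t : B ⊗[K] B →ₗ[K] B) (x ⊗ₜ[K] y)
      = - (wbasis K B t : B ⊗[K] B →ₗ[K] B) (y ⊗ₜ[K] x) :=
  ((mem_Wneg _).mp (SetLike.coe_mem _)).2 x y

lemma qmap_gd
    (hstar : ∀ z w v : A ⊗[K] B, L (z * w) v = L z v * w + L w v * z - L 1 v * (z * w))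
    (j) (x y : A) :
    qmap L j (x*y) = qmap L j x * y + qmap L j y * x - qmap L j 1 * (x*y) := by
  have hQ : ∀ b : B, Qb L (x*y) b = Qb L x b * (y ⊗ₜ[K] (1:B)) + Qb L y b * (x ⊗ₜ[K] (1:B))
      - Qb L 1 b * ((x*y) ⊗ₜ[K] (1:B)) := by
    intro b
    have h := hstar (x ⊗ₜ[K] (1:B)) (y ⊗ₜ[K] (1:B)) ((1:A) ⊗ₜ[K] b)
    rw [Algebra.TensorProduct.tmul_mul_tmul, mul_one] at h
    rw [Algebra.TensorProduct.one_def] at h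
    simpa using h
  have hc : ∀ (k l : Fin (Module.finrank K B)),
      coordW (eB K B) l (Qb L (x*y) (eB K B k))
        = coordW (eB K B) l (Qb L x (eB K B k)) * y
        + coordW (eB K B) l (Qb L y (eB K B k)) * x
        - coordW (eB K B) l (Qb L 1 (eB K B k)) * (x*y) := by
    intro k l
    rw [hQ, map_sub, map_add, coordW_mul, coordW_mul, coordW_mul]
  simp only [qmap_apply, hc, smul_add, smul_sub, Finset.sum_add_distrib,
    Finset.sum_sub_distrib, Finset.sum_mul, smul_mul_assoc]

lemma pmap_star
    (hstar : ∀ z w v : A ⊗[K] B, L (z * w) v = L z v * w + L w v * z - L 1 v * (z * w))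
    (l) (x y c : A) :
    pmap L l (x*y) c = pmap L l x c * y + pmap L l y c * x - pmap L l 1 c * (x*y) := by
  have h := hstar (x ⊗ₜ[K] (1:B)) (y ⊗ₜ[K] (1:B)) (c ⊗ₜ[K] (1:B))
  rw [Algebra.TensorProduct.tmul_mul_tmul, mul_one] at h
  rw [Algebra.TensorProduct.one_def] at h
  simp only [pmap_apply]
  rw [h, map_sub, map_add, coordW_mul, coordW_mul, coordW_mul]

lemma pmap_anti (hanti : ∀ z w : A ⊗[K] B, L z w = - L w z) (l) (a a' : A) :
    pmap L l a a' = - pmap L l a' a := by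
  simp only [pmap_apply]
  rw [hanti, map_neg]

end Main3
section Main4
variable {K : Type*} [Field K] {A B : Type*} [CommRing A] [Algebra K A]
  [CommRing B] [Algebra K B]

variable (K B) in
abbrev IxT [FiniteDimensional K B] : Type _ :=
  Fin (Module.finrank K B) ⊕ (Fin (Module.finrank K ↥(Dgd K B)) ⊕
    (Fin (Module.finrank K ↥(Dgd K B)) ⊕ (Fin (Module.finrank K ↥(Dgd K B)) ⊕
      Fin (Module.finrank K ↥(Wneg K B)))))

variable (L : (A ⊗[K] B) →ₗ[K] (A ⊗[K] B) →ₗ[K] (A ⊗[K] B))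
variable [FiniteDimensional K B]

noncomputable def Ffam : IxT K B → (A →ₗ[K] A →ₗ[K] A) :=
  Sum.elim (pmap L) (Sum.elim (f2a L) (Sum.elim (f2b L) (Sum.elim (f2c L) (f3 L))))

variable (K B) in
noncomputable def Gfam : IxT K B → (B →ₗ[K] B →ₗ[K] B) :=
  Sum.elim (g1 K B) (Sum.elim (g2a K B) (Sum.elim (g2b K B) (Sum.elim (g2c K B) (g3 K B))))

set_option maxHeartbeats 2000000 in
lemma Ldec (h2 : (2:K) ≠ 0)
    (hanti : ∀ z w : A ⊗[K] B, L z w = - L w z)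
    (hstar : ∀ z w v : A ⊗[K] B, L (z * w) v = L z v * w + L w v * z - L 1 v * (z * w))
    (a a' : A) (b b' : B) :
    L (a ⊗ₜ[K] b) (a' ⊗ₜ[K] b') = ∑ x : IxT K B, Ffam L x a a' ⊗ₜ[K] Gfam K B x b b' := by
  have Hsplit : ∀ (x : A) (y : B), x ⊗ₜ[K] y = (x ⊗ₜ[K] (1:B)) * ((1:A) ⊗ₜ[K] y) := by
    intro x y; rw [Algebra.TensorProduct.tmul_mul_tmul, mul_one, one_mul]
  have L11 : L ((1:A) ⊗ₜ[K] (1:B)) ((1:A) ⊗ₜ[K] (1:B)) = 0 := by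
    have h := hanti ((1:A) ⊗ₜ[K] (1:B)) ((1:A) ⊗ₜ[K] (1:B))
    have hadd : L ((1:A) ⊗ₜ[K] (1:B)) ((1:A) ⊗ₜ[K] (1:B))
        + L ((1:A) ⊗ₜ[K] (1:B)) ((1:A) ⊗ₜ[K] (1:B)) = 0 := by
      nth_rewrite 2 [h]; simp
    have h3 : (2:K) • L ((1:A) ⊗ₜ[K] (1:B)) ((1:A) ⊗ₜ[K] (1:B)) = 0 := by
      rw [two_smul]; exact hadd
    exact (smul_eq_zero.mp h3).resolve_left h2
  have H1 : L (a ⊗ₜ[K] b) (a' ⊗ₜ[K] b')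
      = L (a ⊗ₜ[K] (1:B)) (a' ⊗ₜ[K] b') * ((1:A) ⊗ₜ[K] b)
      + L ((1:A) ⊗ₜ[K] b) (a' ⊗ₜ[K] b') * (a ⊗ₜ[K] (1:B))
      - L ((1:A) ⊗ₜ[K] (1:B)) (a' ⊗ₜ[K] b') * (a ⊗ₜ[K] b) := by
    have h := hstar (a ⊗ₜ[K] (1:B)) ((1:A) ⊗ₜ[K] b) (a' ⊗ₜ[K] b')
    rw [← Hsplit a b] at h
    rw [Algebra.TensorProduct.one_def] at h
    exact h
  have H2 : L (a ⊗ₜ[K] (1:B)) (a' ⊗ₜ[K] b')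
      = L (a ⊗ₜ[K] (1:B)) (a' ⊗ₜ[K] (1:B)) * ((1:A) ⊗ₜ[K] b')
      + L (a ⊗ₜ[K] (1:B)) ((1:A) ⊗ₜ[K] b') * (a' ⊗ₜ[K] (1:B))
      - L (a ⊗ₜ[K] (1:B)) ((1:A) ⊗ₜ[K] (1:B)) * (a' ⊗ₜ[K] b') := by
    have h := Lr L hanti hstar (a ⊗ₜ[K] (1:B)) (a' ⊗ₜ[K] (1:B)) ((1:A) ⊗ₜ[K] b')
    rw [← Hsplit a' b'] at h
    rw [Algebra.TensorProduct.one_def] at h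
    exact h
  have H3 : L ((1:A) ⊗ₜ[K] b) (a' ⊗ₜ[K] b')
      = L ((1:A) ⊗ₜ[K] b) (a' ⊗ₜ[K] (1:B)) * ((1:A) ⊗ₜ[K] b')
      + L ((1:A) ⊗ₜ[K] b) ((1:A) ⊗ₜ[K] b') * (a' ⊗ₜ[K] (1:B))
      - L ((1:A) ⊗ₜ[K] b) ((1:A) ⊗ₜ[K] (1:B)) * (a' ⊗ₜ[K] b') := by
    have h := Lr L hanti hstar ((1:A) ⊗ₜ[K] b) (a' ⊗ₜ[K] (1:B)) ((1:A) ⊗ₜ[K] b')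
    rw [← Hsplit a' b'] at h
    rw [Algebra.TensorProduct.one_def] at h
    exact h
  have H4 : L ((1:A) ⊗ₜ[K] (1:B)) (a' ⊗ₜ[K] b')
      = L ((1:A) ⊗ₜ[K] (1:B)) (a' ⊗ₜ[K] (1:B)) * ((1:A) ⊗ₜ[K] b')
      + L ((1:A) ⊗ₜ[K] (1:B)) ((1:A) ⊗ₜ[K] b') * (a' ⊗ₜ[K] (1:B)) := by
    have h := Lr L hanti hstar ((1:A) ⊗ₜ[K] (1:B)) (a' ⊗ₜ[K] (1:B)) ((1:A) ⊗ₜ[K] b')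
    rw [← Hsplit a' b'] at h
    rw [Algebra.TensorProduct.one_def] at h
    rw [L11, zero_mul, sub_zero] at h
    exact h
  have HA1 : L ((1:A) ⊗ₜ[K] b) (a' ⊗ₜ[K] (1:B)) = - L (a' ⊗ₜ[K] (1:B)) ((1:A) ⊗ₜ[K] b) :=
    hanti _ _
  have HA2 : L ((1:A) ⊗ₜ[K] (1:B)) (a' ⊗ₜ[K] (1:B))
      = - L (a' ⊗ₜ[K] (1:B)) ((1:A) ⊗ₜ[K] (1:B)) := hanti _ _
  have keyL0 : L (a ⊗ₜ[K] b) (a' ⊗ₜ[K] b')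
      = L (a ⊗ₜ[K] (1:B)) (a' ⊗ₜ[K] (1:B)) * (((1:A) ⊗ₜ[K] b') * ((1:A) ⊗ₜ[K] b))
      + L (a ⊗ₜ[K] (1:B)) ((1:A) ⊗ₜ[K] b') * ((a' ⊗ₜ[K] (1:B)) * ((1:A) ⊗ₜ[K] b))
      - L (a ⊗ₜ[K] (1:B)) ((1:A) ⊗ₜ[K] (1:B)) * ((a' ⊗ₜ[K] b') * ((1:A) ⊗ₜ[K] b))
      - L (a' ⊗ₜ[K] (1:B)) ((1:A) ⊗ₜ[K] b) * (((1:A) ⊗ₜ[K] b') * (a ⊗ₜ[K] (1:B)))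
      + L ((1:A) ⊗ₜ[K] b) ((1:A) ⊗ₜ[K] b') * ((a' ⊗ₜ[K] (1:B)) * (a ⊗ₜ[K] (1:B)))
      - L ((1:A) ⊗ₜ[K] b) ((1:A) ⊗ₜ[K] (1:B)) * ((a' ⊗ₜ[K] b') * (a ⊗ₜ[K] (1:B)))
      + L (a' ⊗ₜ[K] (1:B)) ((1:A) ⊗ₜ[K] (1:B)) * (((1:A) ⊗ₜ[K] b') * (a ⊗ₜ[K] b))
      - L ((1:A) ⊗ₜ[K] (1:B)) ((1:A) ⊗ₜ[K] b') * ((a' ⊗ₜ[K] (1:B)) * (a ⊗ₜ[K] b)) := by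
    rw [H1, H2, H3, H4, HA1, HA2]
    ring
  have pr1 : ((1:A) ⊗ₜ[K] b') * ((1:A) ⊗ₜ[K] b) = (1:A) ⊗ₜ[K] (b*b') := by
    rw [Algebra.TensorProduct.tmul_mul_tmul, one_mul, mul_comm b' b]
  have pr2 : (a' ⊗ₜ[K] (1:B)) * ((1:A) ⊗ₜ[K] b) = a' ⊗ₜ[K] b := (Hsplit a' b).symm
  have pr3 : (a' ⊗ₜ[K] b') * ((1:A) ⊗ₜ[K] b) = a' ⊗ₜ[K] (b*b') := by
    rw [Algebra.TensorProduct.tmul_mul_tmul, mul_one, mul_comm b' b]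
  have pr4 : ((1:A) ⊗ₜ[K] b') * (a ⊗ₜ[K] (1:B)) = a ⊗ₜ[K] b' := by
    rw [Algebra.TensorProduct.tmul_mul_tmul, one_mul, mul_one]
  have pr5 : (a' ⊗ₜ[K] (1:B)) * (a ⊗ₜ[K] (1:B)) = (a*a') ⊗ₜ[K] (1:B) := by
    rw [Algebra.TensorProduct.tmul_mul_tmul, mul_one, mul_comm a' a]
  have pr6 : (a' ⊗ₜ[K] b') * (a ⊗ₜ[K] (1:B)) = (a*a') ⊗ₜ[K] b' := by
    rw [Algebra.TensorProduct.tmul_mul_tmul, mul_one, mul_comm a' a]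
  have pr7 : ((1:A) ⊗ₜ[K] b') * (a ⊗ₜ[K] b) = a ⊗ₜ[K] (b*b') := by
    rw [Algebra.TensorProduct.tmul_mul_tmul, one_mul, mul_comm b' b]
  have pr8 : (a' ⊗ₜ[K] (1:B)) * (a ⊗ₜ[K] b) = (a*a') ⊗ₜ[K] b := by
    rw [Algebra.TensorProduct.tmul_mul_tmul, one_mul, mul_comm a' a]
  have keyL : L (a ⊗ₜ[K] b) (a' ⊗ₜ[K] b')
      = L (a ⊗ₜ[K] (1:B)) (a' ⊗ₜ[K] (1:B)) * ((1:A) ⊗ₜ[K] (b*b'))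
      + L (a ⊗ₜ[K] (1:B)) ((1:A) ⊗ₜ[K] b') * (a' ⊗ₜ[K] b)
      - L (a ⊗ₜ[K] (1:B)) ((1:A) ⊗ₜ[K] (1:B)) * (a' ⊗ₜ[K] (b*b'))
      - L (a' ⊗ₜ[K] (1:B)) ((1:A) ⊗ₜ[K] b) * (a ⊗ₜ[K] b')
      + L ((1:A) ⊗ₜ[K] b) ((1:A) ⊗ₜ[K] b') * ((a*a') ⊗ₜ[K] (1:B))
      - L ((1:A) ⊗ₜ[K] b) ((1:A) ⊗ₜ[K] (1:B)) * ((a*a') ⊗ₜ[K] b')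
      + L (a' ⊗ₜ[K] (1:B)) ((1:A) ⊗ₜ[K] (1:B)) * (a ⊗ₜ[K] (b*b'))
      - L ((1:A) ⊗ₜ[K] (1:B)) ((1:A) ⊗ₜ[K] b') * ((a*a') ⊗ₜ[K] b) := by
    rw [keyL0, pr1, pr2, pr3, pr4, pr5, pr6, pr7, pr8]
  -- group 1
  have hG1 : L (a ⊗ₜ[K] (1:B)) (a' ⊗ₜ[K] (1:B)) * ((1:A) ⊗ₜ[K] (b*b'))
      = ∑ l, pmap L l a a' ⊗ₜ[K] g1 K B l b b' := by
    rw [show L (a ⊗ₜ[K] (1:B)) (a' ⊗ₜ[K] (1:B)) = Pb L a a' from rfl,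
      ← sum_coordW (eB K B) (Pb L a a'), Finset.sum_mul]
    refine Finset.sum_congr rfl fun l _ => ?_
    rw [Algebra.TensorProduct.tmul_mul_tmul, mul_one]
    rfl
  -- group 2
  have hQ1 := qdec L hanti hstar a b'
  have hQ2 := qdec L hanti hstar a' b
  have hQ3 := qdec L hanti hstar a 1
  have hQ4 := qdec L hanti hstar a' 1
  have hG2 : L (a ⊗ₜ[K] (1:B)) ((1:A) ⊗ₜ[K] b') * (a' ⊗ₜ[K] b)
      - L (a' ⊗ₜ[K] (1:B)) ((1:A) ⊗ₜ[K] b) * (a ⊗ₜ[K] b')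
      - L (a ⊗ₜ[K] (1:B)) ((1:A) ⊗ₜ[K] (1:B)) * (a' ⊗ₜ[K] (b*b'))
      + L (a' ⊗ₜ[K] (1:B)) ((1:A) ⊗ₜ[K] (1:B)) * (a ⊗ₜ[K] (b*b'))
      = ∑ j, f2a L j a a' ⊗ₜ[K] g2a K B j b b'
      + ∑ j, f2b L j a a' ⊗ₜ[K] g2b K B j b b'
      + ∑ j, f2c L j a a' ⊗ₜ[K] g2c K B j b b' := by
    rw [show L (a ⊗ₜ[K] (1:B)) ((1:A) ⊗ₜ[K] b') = Qb L a b' from rfl, hQ1,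
      show L (a' ⊗ₜ[K] (1:B)) ((1:A) ⊗ₜ[K] b) = Qb L a' b from rfl, hQ2,
      show L (a ⊗ₜ[K] (1:B)) ((1:A) ⊗ₜ[K] (1:B)) = Qb L a 1 from rfl, hQ3,
      show L (a' ⊗ₜ[K] (1:B)) ((1:A) ⊗ₜ[K] (1:B)) = Qb L a' 1 from rfl, hQ4]
    rw [Finset.sum_mul, Finset.sum_mul, Finset.sum_mul, Finset.sum_mul]
    rw [← Finset.sum_sub_distrib, ← Finset.sum_sub_distrib, ← Finset.sum_add_distrib,
      ← Finset.sum_add_distrib, ← Finset.sum_add_distrib]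
    refine Finset.sum_congr rfl fun j _ => ?_
    simp only [Algebra.TensorProduct.tmul_mul_tmul, f2a_apply, g2a_apply, f2b_apply,
      g2b_apply, f2c_apply, g2c_apply]
    rw [← TensorProduct.smul_tmul', ← TensorProduct.smul_tmul', ← smul_add]
    have inner : (qmap L j a * a' + qmap L j a' * a) ⊗ₜ[K]
          ((dbasis K B j : B →ₗ[K] B) b' * b - (dbasis K B j : B →ₗ[K] B) b * b')
        + (qmap L j a * a' - qmap L j a' * a) ⊗ₜ[K]
          ((dbasis K B j : B →ₗ[K] B) b' * b + (dbasis K B j : B →ₗ[K] B) b * b')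
        = (2:K) • ((qmap L j a * a') ⊗ₜ[K] ((dbasis K B j : B →ₗ[K] B) b' * b)
          - (qmap L j a' * a) ⊗ₜ[K] ((dbasis K B j : B →ₗ[K] B) b * b')) := by
      simp only [TensorProduct.add_tmul, TensorProduct.sub_tmul, TensorProduct.tmul_add,
        TensorProduct.tmul_sub, two_smul]
      abel
    rw [inner, smul_smul, inv_mul_cancel₀ h2, one_smul, TensorProduct.sub_tmul]
    abel
  -- group 3
  have hS1 := sdec L hanti hstar b b'
  have hS2 := sdec L hanti hstar b 1
  have hS3 := sdec L hanti hstar 1 b'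
  have hG3 : L ((1:A) ⊗ₜ[K] b) ((1:A) ⊗ₜ[K] b') * ((a*a') ⊗ₜ[K] (1:B))
      - L ((1:A) ⊗ₜ[K] b) ((1:A) ⊗ₜ[K] (1:B)) * ((a*a') ⊗ₜ[K] b')
      - L ((1:A) ⊗ₜ[K] (1:B)) ((1:A) ⊗ₜ[K] b') * ((a*a') ⊗ₜ[K] b)
      = ∑ t, f3 L t a a' ⊗ₜ[K] g3 K B t b b' := by
    rw [show L ((1:A) ⊗ₜ[K] b) ((1:A) ⊗ₜ[K] b') = Sb L b b' from rfl, hS1,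
      show L ((1:A) ⊗ₜ[K] b) ((1:A) ⊗ₜ[K] (1:B)) = Sb L b 1 from rfl, hS2,
      show L ((1:A) ⊗ₜ[K] (1:B)) ((1:A) ⊗ₜ[K] b') = Sb L 1 b' from rfl, hS3]
    rw [Finset.sum_mul, Finset.sum_mul, Finset.sum_mul, ← Finset.sum_sub_distrib,
      ← Finset.sum_sub_distrib]
    refine Finset.sum_congr rfl fun t _ => ?_
    simp only [Algebra.TensorProduct.tmul_mul_tmul, mul_one, f3_apply, g3_apply]
    rw [TensorProduct.tmul_sub, TensorProduct.tmul_sub]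
  -- assemble
  simp only [Ffam, Gfam, Fintype.sum_sum_type, Sum.elim_inl, Sum.elim_inr]
  rw [keyL]
  linear_combination hG1 + hG2 + hG3

end Main4
set_option maxHeartbeats 1000000 in
/-- decomposition of anticommutative brackets satisfying identity (★)
on the tensor product `A ⊗ B` with `B` finite-dimensional. -/
theorem stmt_0 (K : Type*) [Field K] (h2 : (2 : K) ≠ 0)
    (A B : Type*) [CommRing A] [Algebra K A] [CommRing B] [Algebra K B]
    [FiniteDimensional K B]
    (L : (A ⊗[K] B) →ₗ[K] (A ⊗[K] B) →ₗ[K] (A ⊗[K] B))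
    (hanti : ∀ z w : A ⊗[K] B, L z w = - L w z)
    (hstar : ∀ z w v : A ⊗[K] B, L (z * w) v = L z v * w + L w v * z - L 1 v * (z * w)) :
    ∃ (n : ℕ) (f : Fin n → (A →ₗ[K] A →ₗ[K] A)) (g : Fin n → (B →ₗ[K] B →ₗ[K] B)),
      (∀ (a a' : A) (b b' : B),
        L (a ⊗ₜ[K] b) (a' ⊗ₜ[K] b') = ∑ i, f i a a' ⊗ₜ[K] g i b b') ∧
      (∀ i, ∀ a b c : A, f i (a * b) c = f i a c * b + f i b c * a - f i 1 c * (a * b)) ∧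
      (∀ i, ∀ a b c : B, g i (a * b) c = g i a c * b + g i b c * a - g i 1 c * (a * b)) ∧
      (∀ i, ((∀ a a' : A, f i a a' = - f i a' a) ∧ (∀ b b' : B, g i b b' = g i b' b)) ∨
            ((∀ a a' : A, f i a a' = f i a' a) ∧ (∀ b b' : B, g i b b' = - g i b' b))) ∧
      (∀ (a a' a'' : A) (b b' b'' : B),
        ∑ i, (f i a a'' * a' - f i a' a'' * a) ⊗ₜ[K] (g i b b'' * b' - g i b' b'' * b)
          = 0) := by
  classical
  set σ : Fin (Fintype.card (IxT K B)) ≃ IxT K B := (Fintype.equivFin (IxT K B)).symm with hσdef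
  refine ⟨Fintype.card (IxT K B), fun i => Ffam L (σ i), fun i => Gfam K B (σ i),
    ?_, ?_, ?_, ?_, ?_⟩
  · -- (1)
    intro a a' b b'
    rw [Ldec L h2 hanti hstar a a' b b']
    exact (Equiv.sum_comp σ fun x => Ffam L x a a' ⊗ₜ[K] Gfam K B x b b').symm
  · -- (2) for f
    intro i x y c
    rcases hx : σ i with l | j | j | j | t <;>
      simp only [hx, Ffam, Sum.elim_inl, Sum.elim_inr]
    · exact pmap_star L hstar l x y c
    · simp only [f2a_apply]
      rw [qmap_gd L hstar j x y]
      simp only [smul_mul_assoc, ← smul_add, ← smul_sub]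
      congr 1
      ring
    · simp only [f2b_apply]
      rw [qmap_gd L hstar j x y]
      simp only [smul_mul_assoc, ← smul_add, ← smul_sub]
      congr 1
      ring
    · simp only [f2c_apply]
      rw [qmap_gd L hstar j x y]
      ring
    · simp only [f3_apply]
      ring
  · -- (2) for g
    intro i x y c
    rcases hx : σ i with l | j | j | j | t <;>
      simp only [hx, Gfam, Sum.elim_inl, Sum.elim_inr]
    · simp only [g1_apply]
      ring
    · simp only [g2a_apply]
      rw [dd_gd j x y]
      ring
    · simp only [g2b_apply]
      rw [dd_gd j x y]
      ring
    · simp only [g2c_apply]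
      ring
    · simp only [g3_apply]
      rw [ww_star t x y c, ww_star t x y 1]
      ring
  · -- (3)
    intro i
    rcases hx : σ i with l | j | j | j | t <;>
      simp only [hx, Ffam, Gfam, Sum.elim_inl, Sum.elim_inr]
    · refine Or.inl ⟨fun a a' => pmap_anti L hanti l a a', fun b b' => ?_⟩
      simp only [g1_apply]
      ring
    · refine Or.inr ⟨fun a a' => ?_, fun b b' => ?_⟩
      · simp only [f2a_apply]
        congr 1
        ring
      · simp only [g2a_apply]
        ring
    · refine Or.inl ⟨fun a a' => ?_, fun b b' => ?_⟩
      · simp only [f2b_apply]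
        rw [← smul_neg]
        congr 1
        ring
      · simp only [g2b_apply]
        ring
    · refine Or.inl ⟨fun a a' => ?_, fun b b' => ?_⟩
      · simp only [f2c_apply]
        ring
      · simp only [g2c_apply]
        ring
    · refine Or.inr ⟨fun a a' => ?_, fun b b' => ?_⟩
      · simp only [f3_apply]
        ring
      · simp only [g3_apply]
        rw [ww_anti t b' b, ww_anti t b' 1, ww_anti t 1 b]
        ring
  · -- (4)
    intro a a' a'' b b' b''
    have h1' : ∀ (x x' : A) (y y' : B), L (x ⊗ₜ[K] y) (x' ⊗ₜ[K] y')
        = ∑ i, Ffam L (σ i) x x' ⊗ₜ[K] Gfam K B (σ i) y y' := by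
      intro x x' y y'
      rw [Ldec L h2 hanti hstar x x' y y']
      exact (Equiv.sum_comp σ fun z => Ffam L z x x' ⊗ₜ[K] Gfam K B z y y').symm
    have hterm : ∀ (x x' : A) (y y' : B),
        ∑ i, (Ffam L (σ i) x a'' * x') ⊗ₜ[K] (Gfam K B (σ i) y b'' * y')
          = L (x ⊗ₜ[K] y) (a'' ⊗ₜ[K] b'') * (x' ⊗ₜ[K] y') := by
      intro x x' y y'
      rw [h1' x a'' y b'', Finset.sum_mul]
      exact Finset.sum_congr rfl fun i _ =>
        (Algebra.TensorProduct.tmul_mul_tmul _ _ _ _).symm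
    have expand : ∑ i, (Ffam L (σ i) a a'' * a' - Ffam L (σ i) a' a'' * a)
          ⊗ₜ[K] (Gfam K B (σ i) b b'' * b' - Gfam K B (σ i) b' b'' * b)
        = L (a ⊗ₜ[K] b) (a'' ⊗ₜ[K] b'') * (a' ⊗ₜ[K] b')
        - L (a ⊗ₜ[K] b') (a'' ⊗ₜ[K] b'') * (a' ⊗ₜ[K] b)
        - (L (a' ⊗ₜ[K] b) (a'' ⊗ₜ[K] b'') * (a ⊗ₜ[K] b')
          - L (a' ⊗ₜ[K] b') (a'' ⊗ₜ[K] b'') * (a ⊗ₜ[K] b)) := by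
      simp only [TensorProduct.tmul_sub, TensorProduct.sub_tmul, Finset.sum_sub_distrib]
      rw [hterm a a' b b', hterm a a' b' b, hterm a' a b b', hterm a' a b' b]
      ring
    rw [expand]
    have h5 := hstar (a ⊗ₜ[K] b) (a' ⊗ₜ[K] b') (a'' ⊗ₜ[K] b'')
    have h6 := hstar (a ⊗ₜ[K] b') (a' ⊗ₜ[K] b) (a'' ⊗ₜ[K] b'')
    have e5 : (a ⊗ₜ[K] b) * (a' ⊗ₜ[K] b') = (a ⊗ₜ[K] b') * (a' ⊗ₜ[K] b) := by
      rw [Algebra.TensorProduct.tmul_mul_tmul, Algebra.TensorProduct.tmul_mul_tmul,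
        mul_comm b b']
    rw [← e5] at h6
    linear_combination h6 - h5
end

section
/- Let K be a field of characteristic ≠ 2 and n ≥ 1 a natural number. The truncated polynomial algebra K[x]/(xⁿ) is univariate-like: there exist an ideal I of K[x]/(xⁿ) and a K-linear map ∂: K[x]/(xⁿ) → K[x]/(xⁿ) such that (i) for every u ∈ I, the map f ↦ u·∂(f) is a derivation of K[x]/(xⁿ); (ii) every derivation of K[x]/(xⁿ) equals f ↦ u·∂(f) for a unique u ∈ I; and (iii) ∂(x₀) = 1 for some x₀ ∈ K[x]/(xⁿ). -/
open Polynomial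

set_option synthInstance.maxHeartbeats 400000
set_option maxHeartbeats 1000000

/-- the truncated polynomial algebra `K[x]/(xⁿ)`, `n ≥ 1`,
is univariate-like. -/
theorem stmt_2 (K : Type*) [Field K] (h2 : (2 : K) ≠ 0) (n : ℕ) (hn : 1 ≤ n) :
    ∃ (I : Ideal (Polynomial K ⧸ Ideal.span {(X : Polynomial K) ^ n}))
      (par : (Polynomial K ⧸ Ideal.span {(X : Polynomial K) ^ n}) →ₗ[K]
             (Polynomial K ⧸ Ideal.span {(X : Polynomial K) ^ n})),
      (∀ u ∈ I, ∀ a b : Polynomial K ⧸ Ideal.span {(X : Polynomial K) ^ n},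
        u * par (a * b) = u * par a * b + a * (u * par b)) ∧
      (∀ D : Derivation K (Polynomial K ⧸ Ideal.span {(X : Polynomial K) ^ n})
               (Polynomial K ⧸ Ideal.span {(X : Polynomial K) ^ n}),
        ∃! u, u ∈ I ∧ ∀ a, D a = u * par a) ∧
      (∃ x₀, par x₀ = 1) := by
  set J : Ideal (Polynomial K) := Ideal.span {(X : Polynomial K) ^ n} with hJ
  set Q := Polynomial K ⧸ J with hQ
  set mk : Polynomial K →+* Q := Ideal.Quotient.mk J with hmkdef
  have mk_surj : Function.Surjective mk := Ideal.Quotient.mk_surjective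
  have hmk_aeval : ∀ f : Polynomial K, aeval (mk X) f = mk f := by
    intro f
    have : aeval ((Ideal.Quotient.mkₐ K J) X) f = (Ideal.Quotient.mkₐ K J) (aeval X f) :=
      aeval_algHom_apply (Ideal.Quotient.mkₐ K J) X f
    simpa [aeval_X_left_apply, Ideal.Quotient.mkₐ_eq_mk] using this
  rcases eq_or_lt_of_le hn with h1 | hn2
  · -- n = 1 case
    refine ⟨⊥, LinearMap.id, ?_, ?_, ⟨1, rfl⟩⟩
    · intro u hu a b
      rw [Ideal.mem_bot] at hu
      subst hu; simp
    · intro D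
      have hD : ∀ a, D a = 0 := by
        intro a
        obtain ⟨f, rfl⟩ := mk_surj a
        have h0 : mk f = algebraMap K Q (f.coeff 0) := by
          have : mk (f - C (f.coeff 0)) = 0 := by
            rw [Ideal.Quotient.eq_zero_iff_mem, hJ, Ideal.mem_span_singleton, ← h1, pow_one]
            rw [X_dvd_iff]
            simp
          have h2' : mk f = mk (C (f.coeff 0)) := by
            rw [map_sub] at this; exact sub_eq_zero.mp this
          rw [h2']
          rfl
        rw [h0, Derivation.map_algebraMap]
      refine ⟨0, ⟨Ideal.zero_mem _, fun a => by simp [hD a]⟩, ?_⟩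
      rintro v ⟨hv, -⟩
      rwa [Ideal.mem_bot] at hv
  · -- n ≥ 2 case
    have hmono : (X : Polynomial K[X]).Monic := monic_X
    have hmonic : ((X : Polynomial K) ^ n).Monic := monic_X_pow n
    -- the linear map on polynomials
    set L : Polynomial K →ₗ[K] Q :=
      (Ideal.Quotient.mkₐ K J).toLinearMap ∘ₗ
        (derivative : Polynomial K →ₗ[K] Polynomial K) ∘ₗ modByMonicHom ((X : Polynomial K) ^ n)
      with hL
    have hker : Submodule.restrictScalars K (J : Ideal (Polynomial K)) ≤ LinearMap.ker L := by
      intro f hf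
      have : (X : Polynomial K) ^ n ∣ f := by
        rwa [Submodule.restrictScalars_mem, hJ, Ideal.mem_span_singleton] at hf
      have hz : f %ₘ (X ^ n) = 0 := (modByMonic_eq_zero_iff_dvd hmonic).mpr this
      simp [hL, LinearMap.mem_ker, modByMonicHom_apply, hz]
    set par : Q →ₗ[K] Q :=
      (Submodule.liftQ (Submodule.restrictScalars K J) L hker) ∘ₗ
        (Submodule.Quotient.restrictScalarsEquiv K J).symm.toLinearMap with hpar
    have par_mk : ∀ f : Polynomial K, par (mk f) = mk (derivative (f %ₘ (X ^ n))) := by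
      intro f
      have h0 : par (mk f) = (Submodule.liftQ (Submodule.restrictScalars K J) L hker)
          ((Submodule.Quotient.restrictScalarsEquiv K J).symm (Submodule.Quotient.mk f)) := rfl
      rw [h0, Submodule.Quotient.restrictScalarsEquiv_symm_mk, Submodule.liftQ_apply]
      rw [hL]
      simp only [LinearMap.coe_comp, Function.comp_apply, AlgHom.toLinearMap_apply,
        modByMonicHom_apply, Ideal.Quotient.mkₐ_eq_mk]
      rfl
    set c : Q := mk (C (n : K) * X ^ (n - 1)) with hc
    set I : Ideal Q := (Submodule.span Q {c}).annihilator with hI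
    have memI : ∀ u : Q, u ∈ I ↔ u * c = 0 := by
      intro u
      rw [hI, Submodule.mem_annihilator_span_singleton, smul_eq_mul]
    have hXn : (mk X) ^ n = 0 := by
      rw [← map_pow, Ideal.Quotient.eq_zero_iff_mem, hJ]
      exact Ideal.subset_span rfl
    have key : ∀ u : Q, u * c = 0 → ∀ f : Polynomial K,
        u * mk (derivative f) = u * par (mk f) := by
      intro u hu f
      rw [par_mk]
      have hsplit : f %ₘ (X ^ n) + X ^ n * (f /ₘ (X ^ n)) = f := modByMonic_add_div f _
      have : derivative f = derivative (f %ₘ X ^ n) +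
          (C (n : K) * X ^ (n - 1) * (f /ₘ X ^ n) + X ^ n * derivative (f /ₘ X ^ n)) := by
        conv_lhs => rw [← hsplit]
        rw [derivative_add, derivative_mul, derivative_X_pow]
      have h1 : mk ((X : Polynomial K) ^ n * derivative (f /ₘ X ^ n)) = 0 := by
        rw [Ideal.Quotient.eq_zero_iff_mem, hJ]
        exact Ideal.mul_mem_right _ _ (Ideal.subset_span rfl)
      have h3 : mk (C (n : K) * X ^ (n - 1) * (f /ₘ X ^ n)) = c * mk (f /ₘ X ^ n) := by
        rw [hc, map_mul]
      rw [this, map_add, map_add, h1, h3, add_zero, mul_add]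
      have h4 : u * (c * mk (f /ₘ X ^ n)) = 0 := by rw [← mul_assoc, hu, zero_mul]
      rw [h4, add_zero]
    have parX : par (mk X) = 1 := by
      rw [par_mk]
      have : (X : Polynomial K) %ₘ (X ^ n) = X := by
        rw [modByMonic_eq_self_iff hmonic, degree_X_pow, degree_X]
        exact_mod_cast hn2
      rw [this, derivative_X, map_one]
    refine ⟨I, par, ?_, ?_, ⟨mk X, parX⟩⟩
    · intro u hu a b
      rw [memI] at hu
      obtain ⟨f, rfl⟩ := mk_surj a
      obtain ⟨g, rfl⟩ := mk_surj b
      have hfg : mk f * mk g = mk (f * g) := (map_mul mk f g).symm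
      rw [hfg, ← key u hu, ← key u hu, ← key u hu, derivative_mul, map_add,
        map_mul mk, map_mul mk]
      ring
    · intro D
      set u : Q := D (mk X) with hu
      have huI : u ∈ I := by
        rw [memI]
        have h0 : D ((mk X) ^ n) = 0 := by rw [hXn, map_zero]
        rw [Derivation.leibniz_pow] at h0
        have hcn : c = (n : Q) * (mk X) ^ (n - 1) := by
          rw [hc, map_mul, map_pow]
          congr 1
        rw [hcn]
        have h5 : (n : Q) * ((mk X) ^ (n - 1) * D (mk X)) = 0 := by
          simpa [nsmul_eq_mul, smul_eq_mul, mul_assoc] using h0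
        calc u * ((n : Q) * (mk X) ^ (n - 1))
            = (n : Q) * ((mk X) ^ (n - 1) * D (mk X)) := by rw [hu]; ring
          _ = 0 := h5
      have hDa : ∀ a, D a = u * par a := by
        intro a
        obtain ⟨f, rfl⟩ := mk_surj a
        have := D.map_aeval f (mk X)
        rw [hmk_aeval, hmk_aeval] at this
        rw [this, smul_eq_mul, mul_comm, ← hu]
        exact key u ((memI u).mp huI) f
      refine ⟨u, ⟨huI, hDa⟩, ?_⟩
      rintro v ⟨hv, hDv⟩
      have : D (mk X) = v * par (mk X) := hDv (mk X)
      rw [parX, mul_one] at this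
      rw [hu, this]
end

section
/- Let K be a field of characteristic ≠ 2 and n ≥ 1 a natural number such that n is not divisible by the characteristic of K (i.e., n·1 ≠ 0 in K). Then every derivation D of the truncated polynomial algebra K[x]/(xⁿ) is of the form D(g) = f · (dg/dx) for a unique element f of the ideal generated by the class of x in K[x]/(xⁿ), where d/dx denotes the (well-defined) formal derivative with respect to x on K[x]/(xⁿ) composed with multiplication by elements of (x̄), making f·d/dx well-defined on the quotient. -/
open Polynomial

set_option synthInstance.maxHeartbeats 400000
set_option maxHeartbeats 1000000

/-- if `n` is not divisible by the characteristic of `K`, every derivation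
of `K[x]/(xⁿ)` is `f · d/dx` for a unique `f` in the ideal generated by the class of `x`. -/
theorem stmt_3 (K : Type*) [Field K] (h2 : (2 : K) ≠ 0) (n : ℕ) (hn : 1 ≤ n)
    (hchar : (n : K) ≠ 0)
    (D : Derivation K (Polynomial K ⧸ Ideal.span {(X : Polynomial K) ^ n})
           (Polynomial K ⧸ Ideal.span {(X : Polynomial K) ^ n})) :
    ∃! f : Polynomial K ⧸ Ideal.span {(X : Polynomial K) ^ n},
      f ∈ Ideal.span {Ideal.Quotient.mk (Ideal.span {(X : Polynomial K) ^ n}) X} ∧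
      ∀ p : Polynomial K,
        D (Ideal.Quotient.mk (Ideal.span {(X : Polynomial K) ^ n}) p) =
          f * Ideal.Quotient.mk (Ideal.span {(X : Polynomial K) ^ n}) (derivative p) := by
  set mk : Polynomial K →+* Polynomial K ⧸ Ideal.span {(X : Polynomial K) ^ n} :=
    Ideal.Quotient.mk (Ideal.span {(X : Polynomial K) ^ n}) with hmk
  set f := D (mk X) with hf
  have hxn : (mk X) ^ n = 0 := by
    rw [← map_pow]
    exact Ideal.Quotient.eq_zero_iff_mem.2 (Ideal.subset_span rfl)
  have hkey : (mk X) ^ (n - 1) * f = 0 := by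
    have h1 : D ((mk X) ^ n) = 0 := by rw [hxn]; exact D.map_zero
    rw [Derivation.leibniz_pow] at h1
    have h2' : (n : K) • ((mk X) ^ (n - 1) * f) = 0 := by
      rw [← h1, ← smul_eq_mul, Nat.cast_smul_eq_nsmul, ← hf]
    rcases smul_eq_zero.1 h2' with h | h
    · exact absurd h hchar
    · exact h
  have hmem : f ∈ Ideal.span {mk X} := by
    obtain ⟨p, hp⟩ := Ideal.Quotient.mk_surjective f
    have hz : mk (X ^ (n - 1) * p) = 0 := by rw [map_mul, map_pow, hp]; exact hkey
    have hdvd : (X : Polynomial K) ^ n ∣ X ^ (n - 1) * p :=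
      (Ideal.mem_span_singleton).1 (Ideal.Quotient.eq_zero_iff_mem.1 hz)
    obtain ⟨q, hq⟩ := hdvd
    have hx : (X : Polynomial K) ^ n = X ^ (n - 1) * X := by
      rw [← pow_succ]; congr 1; omega
    rw [hx, mul_assoc] at hq
    have hp' : p = X * q := mul_left_cancel₀ (pow_ne_zero _ X_ne_zero) hq
    rw [← hp, hp', map_mul]
    exact Ideal.mem_span_singleton.2 ⟨mk q, rfl⟩
  have hform : ∀ p : Polynomial K, D (mk p) = f * mk (derivative p) := by
    intro p
    induction p using Polynomial.induction_on with
    | C a =>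
        have h : mk (C a) = algebraMap K (Polynomial K ⧸ Ideal.span {(X : Polynomial K) ^ n}) a :=
          rfl
        rw [h, D.map_algebraMap, derivative_C, map_zero, mul_zero]
    | add p q hp hq =>
        rw [map_add, map_add, hp, hq, derivative_add, map_add, mul_add]
    | monomial k a ih =>
        rw [show (C a * X ^ (k + 1) : Polynomial K) = (C a * X ^ k) * X by ring,
          map_mul mk (C a * X ^ k) X, D.leibniz, ih, derivative_mul (f := C a * X ^ k) (g := X), derivative_X, mul_one,
          map_add, map_mul mk (derivative (C a * X ^ k)) X,
          smul_eq_mul, smul_eq_mul, ← hf]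
        ring
  refine ⟨f, ⟨hmem, hform⟩, ?_⟩
  rintro g ⟨-, hg⟩
  have hgx := hg X
  rw [derivative_X, map_one, mul_one] at hgx
  rw [← hgx, hf]
end

section
/- Let K be a field of characteristic ≠ 2 and let A be a commutative associative unital K-algebra that is univariate-like, with ideal I, K-linear map ∂: A → A, and x₀ ∈ A with ∂(x₀) = 1 witnessing this. Then every anticommutative bracket [·,·] on A satisfying identity (★) is of the form [a,b] = u·(a∂(b) − b∂(a)) for some u ∈ I. -/
/-- on a univariate-like algebra, every anticommutative bracket
satisfying identity (★) has the form `[a,b] = u·(a∂(b) − b∂(a))` for some `u ∈ I`. -/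
theorem stmt_4 (K : Type*) [Field K] (h2 : (2 : K) ≠ 0)
    (A : Type*) [CommRing A] [Algebra K A]
    (I : Ideal A) (par : A →ₗ[K] A) (x₀ : A)
    (hder : ∀ u ∈ I, ∀ a b : A, u * par (a * b) = u * par a * b + a * (u * par b))
    (hall : ∀ D : Derivation K A A, ∃! u : A, u ∈ I ∧ ∀ a : A, D a = u * par a)
    (hx₀ : par x₀ = 1)
    (L : A →ₗ[K] A →ₗ[K] A)
    (hanti : ∀ a b : A, L a b = - L b a)
    (hstar : ∀ a b c : A, L (a * b) c = L a c * b + L b c * a - L 1 c * (a * b)) :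
    ∃ u ∈ I, ∀ a b : A, L a b = u * (a * par b - b * par a) := by
  -- In A, x + x = 0 implies x = 0 (since 2 is invertible in K).
  have h0 : ∀ x : A, x + x = 0 → x = 0 := by
    intro x hx
    have h2s : (2 : K) • x = 0 := by rw [two_smul]; exact hx
    calc x = ((2 : K)⁻¹ * 2) • x := by rw [inv_mul_cancel₀ h2, one_smul]
    _ = (2 : K)⁻¹ • ((2 : K) • x) := by rw [smul_smul]
    _ = 0 := by rw [h2s, smul_zero]
  -- For each c, a ↦ L a c − L 1 c * a is a derivation.
  have hD : ∀ c : A, ∃ u, u ∈ I ∧ ∀ a : A, L a c - L 1 c * a = u * par a := by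
    intro c
    let D : Derivation K A A :=
      { toLinearMap := L.flip c - L 1 c • LinearMap.id
        map_one_eq_zero' := by
          simp [LinearMap.sub_apply, LinearMap.smul_apply, LinearMap.flip_apply,
            smul_eq_mul]
        leibniz' := by
          intro a b
          simp only [LinearMap.sub_apply, LinearMap.smul_apply, LinearMap.flip_apply,
            LinearMap.id_coe, id_eq, smul_eq_mul]
          rw [hstar a b c]
          ring }
    obtain ⟨u, ⟨hu, hue⟩, -⟩ := hall D
    refine ⟨u, hu, fun a => ?_⟩
    have := hue a
    simpa [D, LinearMap.sub_apply, LinearMap.smul_apply, LinearMap.flip_apply,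
      smul_eq_mul] using this
  choose w hwI hw using hD
  -- diagonal vanishing
  have hdiag : ∀ a : A, L a a = 0 := fun a => h0 _ (by linear_combination (hanti a a))
  -- L c 1 = w 1 * par c
  have hc1 : ∀ c : A, L c 1 = w 1 * par c := by
    intro c
    have := hw 1 c
    have h11 : L 1 1 = 0 := hdiag 1
    linear_combination this + c * h11
  -- general formula: L a c = w c * par a - w 1 * par c * a
  have hform : ∀ a c : A, L a c = w c * par a - w 1 * par c * a := by
    intro a c
    have h1c : L 1 c = -(w 1 * par c) := by
      rw [hanti 1 c, hc1 c]
    have := hw c a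
    linear_combination this + a * h1c
  -- w x₀ = w 1 * x₀
  have hwx : w x₀ = w 1 * x₀ := by
    have := hform x₀ x₀
    rw [hdiag x₀, hx₀] at this
    linear_combination -this
  -- w b = w 1 * b for all b
  have hwb : ∀ b : A, w b = w 1 * b := by
    intro b
    have h1 := hform x₀ b
    have h2' := hform b x₀
    rw [hx₀] at h1 h2'
    have ha := hanti x₀ b
    rw [h1, h2', hwx] at ha
    linear_combination ha
  refine ⟨-(w 1), I.neg_mem (hwI 1), fun a b => ?_⟩
  have := hform a b
  rw [hwb b] at this
  linear_combination this
end

section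
/- Let K be a field of characteristic ≠ 2 and let A be a commutative associative unital K-algebra that is univariate-like, with ideal I, K-linear map ∂: A → A, and x₀ ∈ A with ∂(x₀) = 1 witnessing this. Then every symmetric bracket [·,·] on A satisfying identity (★) is of the form [a,b] = u·∂(a)∂(b) + v·∂(ab) + ab·w for some u, v ∈ I and w ∈ A. -/
/-- on a univariate-like algebra, every symmetric bracket satisfying
identity (★) has the form `[a,b] = u·∂(a)∂(b) + v·∂(ab) + ab·w` with `u, v ∈ I`, `w ∈ A`. -/
theorem stmt_5 (K : Type*) [Field K] (h2 : (2 : K) ≠ 0)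
    (A : Type*) [CommRing A] [Algebra K A]
    (I : Ideal A) (par : A →ₗ[K] A) (x₀ : A)
    (hder : ∀ u ∈ I, ∀ a b : A, u * par (a * b) = u * par a * b + a * (u * par b))
    (hall : ∀ D : Derivation K A A, ∃! u : A, u ∈ I ∧ ∀ a : A, D a = u * par a)
    (hx₀ : par x₀ = 1)
    (L : A →ₗ[K] A →ₗ[K] A)
    (hsymm : ∀ a b : A, L a b = L b a)
    (hstar : ∀ a b c : A, L (a * b) c = L a c * b + L b c * a - L 1 c * (a * b)) :
    ∃ u ∈ I, ∃ v ∈ I, ∃ w : A,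
      ∀ a b : A, L a b = u * par a * par b + v * par (a * b) + a * b * w := by
  have hD : ∀ c : A, ∃ u : A, u ∈ I ∧ ∀ a : A, L a c = u * par a + a * L 1 c := by
    intro c
    let D : Derivation K A A :=
      { toLinearMap := L.flip c - LinearMap.mulRight K (L 1 c)
        map_one_eq_zero' := by simp
        leibniz' := by
          intro a b
          simp only [LinearMap.sub_apply, LinearMap.flip_apply, LinearMap.mulRight_apply,
            smul_eq_mul]
          rw [hstar a b c]
          ring }
    obtain ⟨u, ⟨hu, hu2⟩, -⟩ := hall D
    refine ⟨u, hu, fun a => ?_⟩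
    have := hu2 a
    simp only [D, Derivation.mk_coe, LinearMap.sub_apply, LinearMap.flip_apply,
      LinearMap.mulRight_apply] at this
    linear_combination this
  choose U hUI hU using hD
  have hL1 : ∀ c : A, L 1 c = U 1 * par c + c * L 1 1 := by
    intro c
    rw [hsymm 1 c]
    exact hU 1 c
  have hUe : ∀ c : A, U c = (U x₀ - x₀ * U 1) * par c + c * U 1 := by
    intro c
    have h1 : L x₀ c = L c x₀ := hsymm x₀ c
    rw [hU c x₀, hU x₀ c, hx₀, hL1 c, hL1 x₀, hx₀] at h1
    linear_combination h1
  refine ⟨U x₀ - x₀ * U 1, I.sub_mem (hUI x₀) (I.mul_mem_left x₀ (hUI 1)),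
    U 1, hUI 1, L 1 1, fun a b => ?_⟩
  have h1 := hU b a
  rw [hUe b, hL1 b] at h1
  have h2 := hder (U 1) (hUI 1) a b
  linear_combination h1 - h2
end

section
/- Let K be a field of characteristic ≠ 2. Every anticommutative bracket on K[x]/(x²) satisfying identity (★) is a scalar multiple of the bracket φ given by φ(f,g) = x̄·(f·g' − g·f'), where f ↦ f' is induced by formal differentiation and x̄ is the class of x. In other words, the space of anticommutative brackets on K[x]/(x²) satisfying (★) is one-dimensional, spanned by φ. -/
open Polynomial

set_option synthInstance.maxHeartbeats 400000
set_option maxHeartbeats 2000000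

lemma aux_mem (K : Type*) [Field K] (r : Polynomial K)
    (hr : Ideal.Quotient.mk (Ideal.span {(X : Polynomial K) ^ 2}) r = 0) :
    r.coeff 0 = 0 ∧ r.coeff 1 = 0 := by
  rw [Ideal.Quotient.eq_zero_iff_mem, Ideal.mem_span_singleton] at hr
  obtain ⟨s, rfl⟩ := hr
  constructor <;> rw [mul_comm, coeff_mul_X_pow'] <;> simp

lemma aux_decomp (K : Type*) [Field K] (p : Polynomial K) :
    Ideal.Quotient.mk (Ideal.span {(X : Polynomial K) ^ 2}) p =
    (p.coeff 0) • 1 + (p.coeff 1) • Ideal.Quotient.mk (Ideal.span {(X : Polynomial K) ^ 2}) X := by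
  have h1 := p.divX_mul_X_add
  have h2 := p.divX.divX_mul_X_add
  rw [coeff_divX] at h2
  simp only [zero_add] at h2
  have key : Ideal.Quotient.mk (Ideal.span {(X : Polynomial K) ^ 2}) p =
      Ideal.Quotient.mk (Ideal.span {(X : Polynomial K) ^ 2}) (C (p.coeff 0) + C (p.coeff 1) * X) := by
    rw [Ideal.Quotient.eq, Ideal.mem_span_singleton]
    exact ⟨p.divX.divX, by linear_combination -h1 - X * h2⟩
  rw [key, map_add, map_mul]
  have hc : ∀ a : K, Ideal.Quotient.mk (Ideal.span {(X : Polynomial K) ^ 2}) (C a) =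
      algebraMap K (Polynomial K ⧸ Ideal.span {(X : Polynomial K) ^ 2}) a := fun _ => rfl
  rw [hc, hc, Algebra.algebraMap_eq_smul_one, Algebra.algebraMap_eq_smul_one,
    smul_mul_assoc, one_mul]

/-- every anticommutative bracket on `K[x]/(x²)` satisfying identity (★)
is a scalar multiple of `φ(f,g) = x̄·(f·g' − g·f')`. -/
theorem stmt_6 (K : Type*) [Field K] (h2 : (2 : K) ≠ 0)
    (L : (Polynomial K ⧸ Ideal.span {(X : Polynomial K) ^ 2}) →ₗ[K]
         (Polynomial K ⧸ Ideal.span {(X : Polynomial K) ^ 2}) →ₗ[K]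
         (Polynomial K ⧸ Ideal.span {(X : Polynomial K) ^ 2}))
    (hanti : ∀ a b, L a b = - L b a)
    (hstar : ∀ a b c, L (a * b) c = L a c * b + L b c * a - L 1 c * (a * b)) :
    ∃ c : K, ∀ p q : Polynomial K,
      L (Ideal.Quotient.mk (Ideal.span {(X : Polynomial K) ^ 2}) p)
        (Ideal.Quotient.mk (Ideal.span {(X : Polynomial K) ^ 2}) q) =
      c • (Ideal.Quotient.mk (Ideal.span {(X : Polynomial K) ^ 2}) X *
        (Ideal.Quotient.mk (Ideal.span {(X : Polynomial K) ^ 2}) p *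
           Ideal.Quotient.mk (Ideal.span {(X : Polynomial K) ^ 2}) (derivative q) -
         Ideal.Quotient.mk (Ideal.span {(X : Polynomial K) ^ 2}) q *
           Ideal.Quotient.mk (Ideal.span {(X : Polynomial K) ^ 2}) (derivative p))) := by
  set t : Polynomial K ⧸ Ideal.span {(X : Polynomial K) ^ 2} :=
    Ideal.Quotient.mk (Ideal.span {(X : Polynomial K) ^ 2}) X with ht
  -- t * t = 0
  have htt : t * t = 0 := by
    rw [ht, ← map_mul, ← sq, Ideal.Quotient.eq_zero_iff_mem]
    exact Ideal.subset_span rfl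
  -- t ≠ 0
  have htne : t ≠ 0 := by
    intro h
    have := (aux_mem K X h).2
    simp at this
  -- a self-bracket vanishes
  have hself : ∀ a, L a a = 0 := by
    intro a
    have h := hanti a a
    have h' : (2 : K) • L a a = 0 := by
      rw [two_smul]
      nth_rewrite 2 [h]
      simp
    exact (smul_eq_zero.mp h').resolve_left h2
  -- L t c * t = 0
  have hkey : ∀ c, L t c * t = 0 := by
    intro c
    have h := hstar t t c
    rw [htt] at h
    simp only [map_zero, LinearMap.zero_apply, mul_zero, sub_zero] at h
    have h' : (2 : K) • (L t c * t) = 0 := by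
      rw [two_smul]
      exact h.symm
    exact (smul_eq_zero.mp h').resolve_left h2
  -- L t c is a multiple of t
  have hform : ∀ c, ∃ a : K, L t c = a • t := by
    intro c
    obtain ⟨r, hr⟩ := Ideal.Quotient.mk_surjective (L t c)
    have hd := aux_decomp K r
    rw [hr] at hd
    have h0 : (r.coeff 0) • t = 0 := by
      have := hkey c
      rw [hd, add_mul, smul_mul_assoc, smul_mul_assoc, one_mul, htt, smul_zero,
        add_zero] at this
      exact this
    have : r.coeff 0 = 0 := (smul_eq_zero.mp h0).resolve_right htne
    exact ⟨r.coeff 1, by rw [hd, this, zero_smul, zero_add]⟩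
  obtain ⟨b, hb⟩ := hform 1
  have hL1t : L 1 t = -(b • t) := by rw [hanti 1 t, hb]
  refine ⟨-b, fun p q => ?_⟩
  rw [aux_decomp K p, aux_decomp K q, aux_decomp K (derivative p), aux_decomp K (derivative q)]
  simp only [coeff_derivative, Nat.cast_zero, Nat.cast_one, mul_zero, zero_add, mul_one]
  simp only [map_add, map_smul, LinearMap.add_apply, LinearMap.smul_apply, hb, hL1t,
    hself, ← ht]
  simp only [mul_add, mul_sub, add_mul, sub_mul, smul_mul_assoc, mul_smul_comm, one_mul,
    mul_one, htt, smul_zero, mul_zero, zero_mul]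
  module
end

section
/- Let K be a field of characteristic ≠ 2. The space of symmetric brackets on K[x]/(x²) satisfying identity (★) is four-dimensional, with basis consisting of the brackets φ₁(f,g) = x̄·f'·g', φ₂(f,g) = x̄·(fg)', φ₃(f,g) = fg − x̄·(fg)', φ₄(f,g) = x̄·fg, where f ↦ f' is induced by formal differentiation and x̄ is the class of x. That is, every symmetric bracket on K[x]/(x²) satisfying (★) is a unique K-linear combination of φ₁, φ₂, φ₃, φ₄. -/
open Polynomial

set_option synthInstance.maxHeartbeats 400000
set_option maxHeartbeats 1000000

namespace Stmt7Aux

variable {K : Type*} [Field K]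

local notation "mkq" => Ideal.Quotient.mk (Ideal.span {(X : Polynomial K) ^ 2})

lemma hee : (mkq) X * (mkq) X = 0 := by
  rw [← map_mul, ← sq]
  exact Ideal.Quotient.eq_zero_iff_mem.2 (Ideal.subset_span rfl)

lemma hsmul (a : K) (z : Polynomial K ⧸ Ideal.span {(X : Polynomial K) ^ 2}) :
    (mkq) (C a) * z = a • z := by
  obtain ⟨p, rfl⟩ := Ideal.Quotient.mk_surjective z
  rw [← map_mul, ← smul_eq_C_mul]
  rfl

lemma hmk (p : Polynomial K) : (mkq) p = p.coeff 0 • 1 + p.coeff 1 • (mkq) X := by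
  have hd : (X : Polynomial K) ^ 2 ∣ p - (C (p.coeff 0) + C (p.coeff 1) * X) := by
    rw [Polynomial.X_pow_dvd_iff]
    intro d hd
    interval_cases d <;> simp
  have h0 : (mkq) (p - (C (p.coeff 0) + C (p.coeff 1) * X)) = 0 :=
    Ideal.Quotient.eq_zero_iff_mem.2 (Ideal.mem_span_singleton.2 hd)
  have h' : (mkq) p = (mkq) (C (p.coeff 0) + C (p.coeff 1) * X) := by
    rw [← sub_eq_zero, ← map_sub]; exact h0
  rw [h', map_add, map_mul, ← mul_one ((mkq) (C (p.coeff 0))), hsmul, hsmul]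

lemma indep (a b : K) :
    a • (1 : Polynomial K ⧸ Ideal.span {(X : Polynomial K) ^ 2}) + b • (mkq) X = 0 →
    a = 0 ∧ b = 0 := by
  intro h
  have h1 : (mkq) (C a + C b * X) = 0 := by
    rw [map_add, map_mul, ← mul_one ((mkq) (C a)), hsmul, hsmul]
    exact h
  have h2' : (X : Polynomial K) ^ 2 ∣ C a + C b * X :=
    Ideal.mem_span_singleton.1 (Ideal.Quotient.eq_zero_iff_mem.1 h1)
  rw [Polynomial.X_pow_dvd_iff] at h2'
  have ha := h2' 0 (by norm_num)
  have hb := h2' 1 (by norm_num)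
  simp at ha hb
  exact ⟨ha, hb⟩

lemma indep' (a b a' b' : K)
    (h : a • (1 : Polynomial K ⧸ Ideal.span {(X : Polynomial K) ^ 2}) + b • (mkq) X =
      a' • (1 : Polynomial K ⧸ Ideal.span {(X : Polynomial K) ^ 2}) + b' • (mkq) X) :
    a = a' ∧ b = b' := by
  have h0 : (a - a') • (1 : Polynomial K ⧸ Ideal.span {(X : Polynomial K) ^ 2}) +
      (b - b') • (mkq) X = 0 := by
    rw [sub_smul, sub_smul]
    rw [← sub_eq_zero] at h
    rw [← h]; ring
  have := indep _ _ h0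
  exact ⟨sub_eq_zero.1 this.1, sub_eq_zero.1 this.2⟩

lemma hemul (r : Polynomial K) : (mkq) X * (mkq) r = r.coeff 0 • (mkq) X := by
  rw [hmk r, mul_add, mul_smul_comm, mul_smul_comm, mul_one, hee, smul_zero, add_zero]

lemma hmul_e (a b : K) :
    (a • (1 : Polynomial K ⧸ Ideal.span {(X : Polynomial K) ^ 2}) + b • (mkq) X) * (mkq) X
      = a • (mkq) X := by
  rw [add_mul, smul_mul_assoc, smul_mul_assoc, one_mul, hee, smul_zero, add_zero]

lemma decomp (z : Polynomial K ⧸ Ideal.span {(X : Polynomial K) ^ 2}) :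
    ∃ a b : K, z = a • 1 + b • (mkq) X := by
  obtain ⟨p, rfl⟩ := Ideal.Quotient.mk_surjective z
  exact ⟨p.coeff 0, p.coeff 1, hmk p⟩

end Stmt7Aux

open Stmt7Aux in
/-- every symmetric bracket on `K[x]/(x²)` satisfying identity (★) is a
unique `K`-linear combination of `φ₁(f,g) = x̄f'g'`, `φ₂(f,g) = x̄(fg)'`,
`φ₃(f,g) = fg − x̄(fg)'`, `φ₄(f,g) = x̄fg`. -/
theorem stmt_7 (K : Type*) [Field K] (h2 : (2 : K) ≠ 0)
    (L : (Polynomial K ⧸ Ideal.span {(X : Polynomial K) ^ 2}) →ₗ[K]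
         (Polynomial K ⧸ Ideal.span {(X : Polynomial K) ^ 2}) →ₗ[K]
         (Polynomial K ⧸ Ideal.span {(X : Polynomial K) ^ 2}))
    (hsymm : ∀ a b, L a b = L b a)
    (hstar : ∀ a b c, L (a * b) c = L a c * b + L b c * a - L 1 c * (a * b)) :
    ∃! c : K × K × K × K, ∀ p q : Polynomial K,
      L (Ideal.Quotient.mk (Ideal.span {(X : Polynomial K) ^ 2}) p)
        (Ideal.Quotient.mk (Ideal.span {(X : Polynomial K) ^ 2}) q) =
      c.1 • (Ideal.Quotient.mk (Ideal.span {(X : Polynomial K) ^ 2}) X *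
               Ideal.Quotient.mk (Ideal.span {(X : Polynomial K) ^ 2}) (derivative p) *
               Ideal.Quotient.mk (Ideal.span {(X : Polynomial K) ^ 2}) (derivative q)) +
      c.2.1 • (Ideal.Quotient.mk (Ideal.span {(X : Polynomial K) ^ 2}) X *
               Ideal.Quotient.mk (Ideal.span {(X : Polynomial K) ^ 2}) (derivative (p * q))) +
      c.2.2.1 • (Ideal.Quotient.mk (Ideal.span {(X : Polynomial K) ^ 2}) (p * q) -
               Ideal.Quotient.mk (Ideal.span {(X : Polynomial K) ^ 2}) X *
               Ideal.Quotient.mk (Ideal.span {(X : Polynomial K) ^ 2}) (derivative (p * q))) +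
      c.2.2.2 • (Ideal.Quotient.mk (Ideal.span {(X : Polynomial K) ^ 2}) X *
               Ideal.Quotient.mk (Ideal.span {(X : Polynomial K) ^ 2}) (p * q)) := by
  have hLe : ∀ c, L (Ideal.Quotient.mk (Ideal.span {(X : Polynomial K) ^ 2}) X) c *
      Ideal.Quotient.mk (Ideal.span {(X : Polynomial K) ^ 2}) X = 0 := by
    intro c
    have h := hstar (Ideal.Quotient.mk (Ideal.span {(X : Polynomial K) ^ 2}) X)
      (Ideal.Quotient.mk (Ideal.span {(X : Polynomial K) ^ 2}) X) c
    rw [hee] at h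
    simp only [map_zero, LinearMap.zero_apply, mul_zero, sub_zero] at h
    have h2x : (2 : K) • (L (Ideal.Quotient.mk (Ideal.span {(X : Polynomial K) ^ 2}) X) c *
        Ideal.Quotient.mk (Ideal.span {(X : Polynomial K) ^ 2}) X) = 0 := by
      rw [two_smul]; exact h.symm
    have h3 := congrArg (fun z => (2 : K)⁻¹ • z) h2x
    simpa [smul_smul, inv_mul_cancel₀ h2] using h3
  obtain ⟨s, t, h11⟩ := decomp (L 1 1)
  have hLe' : ∀ c, ∃ u : K,
      L (Ideal.Quotient.mk (Ideal.span {(X : Polynomial K) ^ 2}) X) c =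
        u • Ideal.Quotient.mk (Ideal.span {(X : Polynomial K) ^ 2}) X := by
    intro c
    obtain ⟨a, b, hab⟩ :=
      decomp (L (Ideal.Quotient.mk (Ideal.span {(X : Polynomial K) ^ 2}) X) c)
    have h0 := hLe c
    rw [hab, hmul_e] at h0
    have ha : a = 0 := (indep 0 a (by simpa using h0)).2
    exact ⟨b, by rw [hab, ha, zero_smul, zero_add]⟩
  obtain ⟨u, he1⟩ := hLe' 1
  obtain ⟨v, heE⟩ := hLe' (Ideal.Quotient.mk (Ideal.span {(X : Polynomial K) ^ 2}) X)
  have h1e : L 1 (Ideal.Quotient.mk (Ideal.span {(X : Polynomial K) ^ 2}) X) =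
      u • Ideal.Quotient.mk (Ideal.span {(X : Polynomial K) ^ 2}) X := by
    rw [hsymm]; exact he1
  refine ⟨(v, u, s, t), ?_, ?_⟩
  · intro p q
    dsimp only
    have lhs : L (Ideal.Quotient.mk (Ideal.span {(X : Polynomial K) ^ 2}) p)
        (Ideal.Quotient.mk (Ideal.span {(X : Polynomial K) ^ 2}) q) =
        (p.coeff 0 * q.coeff 0) • (s • (1 : Polynomial K ⧸ Ideal.span {(X : Polynomial K) ^ 2})
          + t • Ideal.Quotient.mk (Ideal.span {(X : Polynomial K) ^ 2}) X) +
        (p.coeff 0 * q.coeff 1 + p.coeff 1 * q.coeff 0) •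
          (u • Ideal.Quotient.mk (Ideal.span {(X : Polynomial K) ^ 2}) X) +
        (p.coeff 1 * q.coeff 1) •
          (v • Ideal.Quotient.mk (Ideal.span {(X : Polynomial K) ^ 2}) X) := by
      rw [hmk p, hmk q]
      simp only [map_add, map_smul, LinearMap.add_apply, LinearMap.smul_apply]
      rw [h11, h1e, he1, heE]
      module
    rw [lhs]
    have r1 : Ideal.Quotient.mk (Ideal.span {(X : Polynomial K) ^ 2}) X *
        Ideal.Quotient.mk (Ideal.span {(X : Polynomial K) ^ 2}) (derivative p) *
        Ideal.Quotient.mk (Ideal.span {(X : Polynomial K) ^ 2}) (derivative q)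
        = (p.coeff 1 * q.coeff 1) • Ideal.Quotient.mk (Ideal.span {(X : Polynomial K) ^ 2}) X := by
      rw [hemul (derivative p), smul_mul_assoc, hemul (derivative q)]
      simp [coeff_derivative, smul_smul]
    have r2 : Ideal.Quotient.mk (Ideal.span {(X : Polynomial K) ^ 2}) X *
        Ideal.Quotient.mk (Ideal.span {(X : Polynomial K) ^ 2}) (derivative (p * q))
        = (p.coeff 0 * q.coeff 1 + p.coeff 1 * q.coeff 0) •
          Ideal.Quotient.mk (Ideal.span {(X : Polynomial K) ^ 2}) X := by
      rw [derivative_mul, map_add, mul_add, map_mul, map_mul,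
        ← mul_assoc, hemul (derivative p), ← mul_assoc, hemul p,
        smul_mul_assoc, smul_mul_assoc, hemul q, hemul (derivative q)]
      simp only [coeff_derivative, smul_smul]
      module
    have r3 : Ideal.Quotient.mk (Ideal.span {(X : Polynomial K) ^ 2}) (p * q) =
        (p.coeff 0 * q.coeff 0) • (1 : Polynomial K ⧸ Ideal.span {(X : Polynomial K) ^ 2}) +
        (p.coeff 0 * q.coeff 1 + p.coeff 1 * q.coeff 0) •
          Ideal.Quotient.mk (Ideal.span {(X : Polynomial K) ^ 2}) X := by
      rw [hmk (p * q), Polynomial.mul_coeff_zero]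
      congr 1
      rw [Polynomial.coeff_mul, Finset.Nat.sum_antidiagonal_eq_sum_range_succ_mk]
      simp [Finset.sum_range_succ]
    have r4 : Ideal.Quotient.mk (Ideal.span {(X : Polynomial K) ^ 2}) X *
        Ideal.Quotient.mk (Ideal.span {(X : Polynomial K) ^ 2}) (p * q) =
        (p.coeff 0 * q.coeff 0) • Ideal.Quotient.mk (Ideal.span {(X : Polynomial K) ^ 2}) X := by
      rw [hemul (p * q), Polynomial.mul_coeff_zero]
    rw [r1, r2, r4, r3]
    module
  · rintro ⟨c1, c2, c3, c4⟩ hc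
    have E1 := hc 1 1
    simp only [map_one, one_mul, mul_one, derivative_one, map_zero, mul_zero, zero_mul,
      smul_zero, zero_add, add_zero, sub_zero] at E1
    rw [h11] at E1
    have hst := indep' s t c3 c4 E1
    have E2 := hc 1 X
    simp only [map_one, one_mul, mul_one, derivative_one, derivative_X, map_zero, mul_zero,
      zero_mul, smul_zero, zero_add, add_zero, sub_self, hee] at E2
    rw [h1e] at E2
    have hu : u = c2 := (indep' 0 u 0 c2 (by simpa using E2)).2
    have E3 := hc X X
    simp only [derivative_X, map_one, mul_one, one_mul, derivative_mul, map_add, map_mul,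
      hee, mul_add, zero_mul, mul_zero, add_zero, zero_add, smul_zero, sub_zero, sub_self,
      zero_sub, smul_neg, neg_zero] at E3
    rw [heE] at E3
    have hv : v = c1 := (indep' 0 v 0 c1 (by simpa using E3)).2
    simp [Prod.ext_iff, hst.1, hst.2, hu, hv]
end

section
/- Let K be a field of characteristic ≠ 2, let A = K[x,y]/(x², y²), and let [·,·]_A be the Poisson bracket on A determined by [x̄,ȳ]_A = x̄ȳ (extended to all of A by bilinearity, anticommutativity, [1,A]_A = 0, and the Leibniz rule; explicitly, on the basis 1, x̄, ȳ, x̄ȳ the only nonzero basis brackets are [x̄,ȳ]_A = x̄ȳ = −[ȳ,x̄]_A). Then there is no derivation D of A such that D([a,b]_A) − [D(a),b]_A + [D(b),a]_A = [a,b]_A for all a,b ∈ A. -/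
open MvPolynomial

set_option synthInstance.maxHeartbeats 800000
set_option maxHeartbeats 800000

/-- The algebra `K[x,y]/(x²,y²)`. -/
noncomputable abbrev DblTrunc (K : Type*) [Field K] :=
  MvPolynomial (Fin 2) K ⧸
    Ideal.span {(X 0 : MvPolynomial (Fin 2) K) ^ 2, (X 1 : MvPolynomial (Fin 2) K) ^ 2}

/-- The quotient map `K[x,y] → K[x,y]/(x²,y²)`. -/
noncomputable abbrev dmk (K : Type*) [Field K] : MvPolynomial (Fin 2) K →+* DblTrunc K :=
  Ideal.Quotient.mk
    (Ideal.span {(X 0 : MvPolynomial (Fin 2) K) ^ 2, (X 1 : MvPolynomial (Fin 2) K) ^ 2})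

section Aux

variable (K : Type*) [Field K]

lemma aux_hx2 : dmk K (X 0) * dmk K (X 0) = 0 := by
  rw [← map_mul, ← sq]
  exact Ideal.Quotient.eq_zero_iff_mem.2 (Ideal.subset_span (by simp))

lemma aux_hy2 : dmk K (X 1) * dmk K (X 1) = 0 := by
  rw [← map_mul, ← sq]
  exact Ideal.Quotient.eq_zero_iff_mem.2 (Ideal.subset_span (by simp))

lemma aux_alg (r : K) : dmk K (C r) = algebraMap K (DblTrunc K) r := rfl

lemma aux_smul (r : K) (a : DblTrunc K) :
    r • a = algebraMap K (DblTrunc K) r * a := Algebra.smul_def r a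

lemma aux_exists_coeffs (a : DblTrunc K) :
    ∃ c0 c1 c2 c3 : K, a = c0 • 1
      + c1 • dmk K (X 0)
      + c2 • dmk K (X 1)
      + c3 • (dmk K (X 0) * dmk K (X 1)) := by
  obtain ⟨p, rfl⟩ := Ideal.Quotient.mk_surjective a
  induction p using MvPolynomial.induction_on with
  | C r =>
    exact ⟨r, 0, 0, 0, by simp [aux_smul, ← aux_alg]⟩
  | add p q hp hq =>
    obtain ⟨c0, c1, c2, c3, hc⟩ := hp
    obtain ⟨d0, d1, d2, d3, hd⟩ := hq
    exact ⟨c0 + d0, c1 + d1, c2 + d2, c3 + d3, by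
      rw [map_add, hc, hd]; simp only [add_smul]; ring⟩
  | mul_X p n hp =>
    obtain ⟨c0, c1, c2, c3, hc⟩ := hp
    fin_cases n
    · refine ⟨0, c0, 0, c2, ?_⟩
      rw [map_mul, hc]
      simp only [aux_smul, map_zero, zero_mul, mul_zero, add_zero, mul_one,
        Fin.zero_eta, Fin.mk_one]
      linear_combination (algebraMap K (DblTrunc K) c1
        + algebraMap K (DblTrunc K) c3 * dmk K (X 1)) * aux_hx2 K
    · refine ⟨0, 0, c0, c1, ?_⟩
      rw [map_mul, hc]
      simp only [aux_smul, map_zero, zero_mul, mul_zero, add_zero, mul_one,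
        Fin.zero_eta, Fin.mk_one]
      linear_combination (algebraMap K (DblTrunc K) c2
        + algebraMap K (DblTrunc K) c3 * dmk K (X 0)) * aux_hy2 K

lemma aux_xy_ne : dmk K (X 0) * dmk K (X 1) ≠ 0 := by
  rw [← map_mul, Ne, Ideal.Quotient.eq_zero_iff_mem, Ideal.mem_span_pair]
  rintro ⟨u, v, huv⟩
  have h := congrArg (coeff (Finsupp.single 0 1 + Finsupp.single 1 1)) huv
  rw [coeff_add] at h
  have h0 : coeff (Finsupp.single 0 1 + Finsupp.single 1 1) (u * X 0 ^ 2) = 0 := by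
    rw [pow_two, ← mul_assoc, coeff_mul_X', if_pos (by simp), add_tsub_cancel_left,
      coeff_mul_X', if_neg (by simp)]
  have h1 : coeff (Finsupp.single 0 1 + Finsupp.single 1 1) (v * X 1 ^ 2) = 0 := by
    rw [pow_two, ← mul_assoc, coeff_mul_X', if_pos (by simp), add_tsub_cancel_right,
      coeff_mul_X', if_neg (by simp)]
  have h2 : coeff (Finsupp.single 0 1 + Finsupp.single 1 1)
      ((X 0 : MvPolynomial (Fin 2) K) * X 1) = 1 := by
    rw [coeff_mul_X', if_pos (by simp), add_tsub_cancel_right, coeff_X, if_pos rfl]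
  rw [h0, h1, h2] at h
  simp at h

end Aux

/-- for the Poisson bracket on `K[x,y]/(x²,y²)` with `[x̄,ȳ] = x̄ȳ`
(and all other brackets of the basis elements `1, x̄, ȳ, x̄ȳ` zero), there is no
derivation `D` with `D([a,b]) − [D(a),b] + [D(b),a] = [a,b]` for all `a, b`. -/

theorem stmt_12 (K : Type*) [Field K] (h2 : (2 : K) ≠ 0)
    (P : DblTrunc K →ₗ[K] DblTrunc K →ₗ[K] DblTrunc K)
    (hbasis : ∀ i j : Fin 4,
      P (![1, dmk K (X 0), dmk K (X 1), dmk K (X 0) * dmk K (X 1)] i)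
        (![1, dmk K (X 0), dmk K (X 1), dmk K (X 0) * dmk K (X 1)] j) =
      if i = 1 ∧ j = 2 then dmk K (X 0) * dmk K (X 1)
      else if i = 2 ∧ j = 1 then -(dmk K (X 0) * dmk K (X 1))
      else 0) :
    ¬ ∃ D : Derivation K (DblTrunc K) (DblTrunc K),
        ∀ a b : DblTrunc K, D (P a b) - P (D a) b + P (D b) a = P a b := by
  rintro ⟨D, hD⟩
  set x := dmk K (X 0) with hx
  set y := dmk K (X 1) with hy
  have hP02 : P 1 y = 0 := by simpa using hbasis 0 2
  have hP12 : P x y = x * y := by simpa using hbasis 1 2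
  have hP22 : P y y = 0 := by simpa using hbasis 2 2
  have hP32 : P (x * y) y = 0 := by simpa using hbasis 3 2
  have hP01 : P 1 x = 0 := by simpa using hbasis 0 1
  have hP11 : P x x = 0 := by simpa using hbasis 1 1
  have hP21 : P y x = -(x * y) := by simpa using hbasis 2 1
  have hP31 : P (x * y) x = 0 := by simpa using hbasis 3 1
  obtain ⟨c0, c1, c2, c3, hc⟩ := aux_exists_coeffs K (D x)
  obtain ⟨d0, d1, d2, d3, hd⟩ := aux_exists_coeffs K (D y)
  have E := hD x y
  rw [hP12, D.leibniz, smul_eq_mul, smul_eq_mul, hc, hd] at E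
  simp only [← hx, ← hy, map_add, LinearMap.add_apply, map_smul, LinearMap.smul_apply,
    hP02, hP12, hP22, hP32, hP01, hP11, hP21, hP31,
    smul_zero, smul_neg, add_zero, zero_add] at E
  simp only [aux_smul, mul_one] at E
  -- hopefully E is now a pure ring equation
  have G : algebraMap K (DblTrunc K) d0 * x + algebraMap K (DblTrunc K) c0 * y - x * y = 0 := by
    linear_combination E - (algebraMap K (DblTrunc K) d1
        + algebraMap K (DblTrunc K) d3 * y) * aux_hx2 K
      - (algebraMap K (DblTrunc K) c2 + algebraMap K (DblTrunc K) c3 * x) * aux_hy2 K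
  have G' : dmk K (C d0 * X 0 + C c0 * X 1 - X 0 * X 1) = 0 := by
    rw [map_sub, map_add, map_mul, map_mul, map_mul, aux_alg, aux_alg]
    exact G
  have hmem := Ideal.Quotient.eq_zero_iff_mem.1 G'
  rw [Ideal.mem_span_pair] at hmem
  obtain ⟨u, v, huv⟩ := hmem
  have h := congrArg (coeff (Finsupp.single 0 1 + Finsupp.single 1 1)) huv
  rw [coeff_add] at h
  have h0 : coeff (Finsupp.single 0 1 + Finsupp.single 1 1) (u * X 0 ^ 2) = 0 := by
    rw [pow_two, ← mul_assoc, coeff_mul_X', if_pos (by simp), add_tsub_cancel_left,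
      coeff_mul_X', if_neg (by simp)]
  have h1 : coeff (Finsupp.single 0 1 + Finsupp.single 1 1) (v * X 1 ^ 2) = 0 := by
    rw [pow_two, ← mul_assoc, coeff_mul_X', if_pos (by simp), add_tsub_cancel_right,
      coeff_mul_X', if_neg (by simp)]
  have e0 : coeff (Finsupp.single 0 1 + Finsupp.single 1 1)
      (X 0 : MvPolynomial (Fin 2) K) = 0 := by
    rw [coeff_X', if_neg]
    intro hs
    have := DFunLike.congr_fun hs 1
    simp at this
  have e1 : coeff (Finsupp.single 0 1 + Finsupp.single 1 1)
      (X 1 : MvPolynomial (Fin 2) K) = 0 := by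
    rw [coeff_X', if_neg]
    intro hs
    have := DFunLike.congr_fun hs 0
    simp at this
  have e01 : coeff (Finsupp.single 0 1 + Finsupp.single 1 1)
      ((X 0 : MvPolynomial (Fin 2) K) * X 1) = 1 := by
    rw [coeff_mul_X', if_pos (by simp), add_tsub_cancel_right, coeff_X, if_pos rfl]
  rw [h0, h1, coeff_sub, coeff_add, coeff_C_mul, coeff_C_mul, e0, e1, e01] at h
  simp at h
end

section
/- Let K be a field of characteristic ≠ 2 and n a natural number. Every anticommutative bracket [·,·] on the polynomial algebra K[x₁,…,xₙ] satisfying identity (★) is of the form [a,b] = Σ_{1≤i<j≤n} f_{ij}·(∂a/∂x_i·∂b/∂x_j − ∂b/∂x_i·∂a/∂x_j) + (Σ_{i=1}^n f_i·∂a/∂x_i)·b − (Σ_{i=1}^n f_i·∂b/∂x_i)·a for some polynomials f_{ij}, f_i ∈ K[x₁,…,xₙ]. -/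
open MvPolynomial


theorem deriv_expand {K : Type*} [CommRing K] {n : ℕ}
    (D : MvPolynomial (Fin n) K → MvPolynomial (Fin n) K)
    (hsmul : ∀ (r : K) a, D (r • a) = r • D a)
    (hadd : ∀ a b, D (a + b) = D a + D b)
    (hmul : ∀ a b, D (a * b) = D a * b + D b * a) (a : MvPolynomial (Fin n) K) :
    D a = ∑ i, D (X i) * pderiv i a := by
  have h1 : D 1 = 0 := by
    have := hmul 1 1
    simp only [mul_one, one_mul] at this
    exact (left_eq_add.mp this)
  induction a using MvPolynomial.induction_on with
  | C r =>
      have hc : (C r : MvPolynomial (Fin n) K) = r • 1 := by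
        rw [smul_eq_C_mul, mul_one]
      rw [hc, hsmul, h1, smul_zero]
      simp [map_smul]
  | add p q hp hq =>
      rw [hadd, hp, hq, ← Finset.sum_add_distrib]
      simp [mul_add]
  | mul_X p i hp =>
      rw [hmul, hp, Finset.sum_mul, Finset.sum_congr rfl
        (fun j (_ : j ∈ Finset.univ) => (mul_assoc (D (X j)) (pderiv j p) (X i)))]
      have : ∀ j ∈ Finset.univ, D (X j) * pderiv j (p * X i)
          = D (X j) * (pderiv j p * X i) + D (X j) * (p * pderiv j (X i)) := by
        intro j _
        rw [pderiv_mul, mul_add]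
      rw [Finset.sum_congr rfl this, Finset.sum_add_distrib]
      congr 1
      rw [Finset.sum_eq_single i]
      · rw [pderiv_X_self, mul_one, mul_comm]
      · intro j _ hj
        rw [pderiv_X_of_ne (Ne.symm hj), mul_zero, mul_zero]
      · intro h; exact absurd (Finset.mem_univ i) h

theorem sum_antisym {M : Type*} [AddCommGroup M] {n : ℕ} (F : Fin n → Fin n → M)
    (hdiag : ∀ i, F i i = 0) :
    ∑ i, ∑ j, F i j = ∑ i, ∑ j, (if i < j then F i j + F j i else 0) := by
  have e1 : ∀ i j : Fin n, (if i < j then F i j + F j i else 0)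
      = (if i < j then F i j else 0) + (if i < j then F j i else 0) := by
    intro i j; split_ifs <;> simp
  simp only [e1, Finset.sum_add_distrib]
  have e2 : ∑ i : Fin n, ∑ j : Fin n, (if i < j then F j i else 0)
      = ∑ i : Fin n, ∑ j : Fin n, (if j < i then F i j else 0) := by
    rw [Finset.sum_comm]
  rw [e2, ← Finset.sum_add_distrib]
  refine Finset.sum_congr rfl fun i _ => ?_
  rw [← Finset.sum_add_distrib]
  refine Finset.sum_congr rfl fun j _ => ?_
  rcases lt_trichotomy i j with h | h | h
  · simp [h, not_lt.mpr h.le]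
  · simp [h, hdiag]
  · simp [h, not_lt.mpr h.le]

set_option maxHeartbeats 1000000 in
/-- every anticommutative bracket on `K[x₁,…,xₙ]` satisfying identity (★)
is of the form
`[a,b] = Σ_{i<j} f_{ij}(∂ᵢa ∂ⱼb − ∂ᵢb ∂ⱼa) + (Σᵢ fᵢ ∂ᵢa)·b − (Σᵢ fᵢ ∂ᵢb)·a`. -/
theorem stmt_14 (K : Type*) [Field K] (h2 : (2 : K) ≠ 0) (n : ℕ)
    (L : MvPolynomial (Fin n) K →ₗ[K] MvPolynomial (Fin n) K →ₗ[K] MvPolynomial (Fin n) K)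
    (hanti : ∀ a b, L a b = - L b a)
    (hstar : ∀ a b c, L (a * b) c = L a c * b + L b c * a - L 1 c * (a * b)) :
    ∃ (fij : Fin n → Fin n → MvPolynomial (Fin n) K) (fi : Fin n → MvPolynomial (Fin n) K),
      ∀ a b : MvPolynomial (Fin n) K,
        L a b =
          (∑ i, ∑ j, if i < j then
              fij i j * (pderiv i a * pderiv j b - pderiv i b * pderiv j a) else 0) +
          (∑ i, fi i * pderiv i a) * b - (∑ i, fi i * pderiv i b) * a := by
  classical
  have hzero : ∀ p : MvPolynomial (Fin n) K, p = -p → p = 0 := by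
    intro p hp
    have h2p : (2 : K) • p = 0 := by
      rw [two_smul]
      nth_rewrite 1 [hp]
      abel
    rcases smul_eq_zero.mp h2p with h | h
    · exact absurd h h2
    · exact h
  have hL11 : L 1 1 = 0 := hzero _ (hanti 1 1)
  have hexp : ∀ c a, L a c = (∑ i, (L (X i) c - L 1 c * X i) * pderiv i a) + L 1 c * a := by
    intro c a
    have hD := deriv_expand (fun x => L x c - L 1 c * x)
      (by intro r x; simp [map_smul, smul_sub, mul_smul_comm])
      (by intro x y; simp only [map_add, LinearMap.add_apply]; ring)
      (by intro x y; simp only [hstar]; ring) a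
    linear_combination hD
  have hL1 : ∀ c, L 1 c = -∑ j, L (X j) 1 * pderiv j c := by
    intro c
    rw [hanti 1 c, hexp 1 c, hL11]
    simp
  have hXi : ∀ i c, L (X i) c =
      (∑ j, (L (X i) (X j) - L (X i) 1 * X j) * pderiv j c) + L (X i) 1 * c := by
    intro i c
    have h1Xi : L 1 (X i) = -L (X i) 1 := by
      rw [hL1 (X i), Finset.sum_eq_single i]
      · rw [pderiv_X_self, mul_one]
      · intro j _ hj; rw [pderiv_X_of_ne hj.symm, mul_zero]
      · intro h; exact absurd (Finset.mem_univ i) h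
    rw [hanti (X i) c, hexp (X i) c, h1Xi, neg_add, ← Finset.sum_neg_distrib]
    rw [Finset.sum_congr rfl (fun j (_ : j ∈ Finset.univ) => ?_)]
    · ring
    · rw [hanti (X j) (X i)]; ring
  refine ⟨fun i j => L (X i) (X j) - L (X i) 1 * X j + L (X j) 1 * X i,
    fun i => L (X i) 1, fun a b => ?_⟩
  simp only
  have stepA : L a b =
      (∑ i, ∑ j, (L (X i) (X j) - L (X i) 1 * X j + L (X j) 1 * X i)
          * (pderiv i a * pderiv j b))
        + (∑ i, L (X i) 1 * pderiv i a) * b - (∑ i, L (X i) 1 * pderiv i b) * a := by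
    rw [hexp b a, hL1 b]
    rw [Finset.sum_congr rfl (fun i (_ : i ∈ Finset.univ) => by rw [hXi i b])]
    have hterm : ∀ i ∈ Finset.univ, ((∑ j, (L (X i) (X j) - L (X i) 1 * X j) * pderiv j b)
          + L (X i) 1 * b - (-∑ j, L (X j) 1 * pderiv j b) * X i) * pderiv i a
        = (∑ j, (L (X i) (X j) - L (X i) 1 * X j + L (X j) 1 * X i)
            * (pderiv i a * pderiv j b)) + L (X i) 1 * pderiv i a * b := by
      intro i _
      have e : ∑ j, (L (X i) (X j) - L (X i) 1 * X j + L (X j) 1 * X i)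
            * (pderiv i a * pderiv j b)
          = ∑ j, (((L (X i) (X j) - L (X i) 1 * X j) * pderiv j b) * pderiv i a
            + (L (X j) 1 * pderiv j b) * (X i * pderiv i a)) :=
        Finset.sum_congr rfl (fun j _ => by ring)
      rw [e, Finset.sum_add_distrib, ← Finset.sum_mul, ← Finset.sum_mul]
      ring
    rw [Finset.sum_congr rfl hterm, Finset.sum_add_distrib, ← Finset.sum_mul]
    ring
  rw [stepA]
  have key := sum_antisym
    (fun i j => (L (X i) (X j) - L (X i) 1 * X j + L (X j) 1 * X i)
      * (pderiv i a * pderiv j b))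
    (by
      intro i
      have : L (X i) (X i) = 0 := hzero _ (hanti (X i) (X i))
      simp only [this]
      ring)
  rw [key]
  congr 1
  congr 1
  refine Finset.sum_congr rfl fun i _ => Finset.sum_congr rfl fun j _ => ?_
  split_ifs with h
  · rw [hanti (X j) (X i)]
    ring
  · rfl
end

section
/- Let K be a field of characteristic p > 2 and n a natural number. Every anticommutative bracket [·,·] on the reduced polynomial algebra O = K[x₁,…,xₙ]/(x₁^p,…,xₙ^p) satisfying identity (★) is of the form [a,b] = Σ_{1≤i<j≤n} f_{ij}·(∂a/∂x_i·∂b/∂x_j − ∂b/∂x_i·∂a/∂x_j) + (Σ_{i=1}^n f_i·∂a/∂x_i)·b − (Σ_{i=1}^n f_i·∂b/∂x_i)·a for some elements f_{ij}, f_i ∈ O, where ∂/∂x_i denotes the partial derivative induced on the quotient (well-defined since ∂(x_j^p)/∂x_i = 0 in characteristic p). -/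
open MvPolynomial Finset

lemma deriv_repr {K : Type*} [CommSemiring K] {n : ℕ} {R : Type*} [CommRing R] [Algebra K R]
    (φ : MvPolynomial (Fin n) K →ₐ[K] R) (D : MvPolynomial (Fin n) K →ₗ[K] R)
    (hD : ∀ u v, D (u * v) = D u * φ v + D v * φ u - D 1 * φ (u * v))
    (a : MvPolynomial (Fin n) K) :
    D a = D 1 * φ a + ∑ i, (D (X i) - D 1 * φ (X i)) * φ (pderiv i a) := by
  induction a using MvPolynomial.induction_on with
  | C r =>
      have h1 : (C r : MvPolynomial (Fin n) K) = r • 1 := by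
        rw [MvPolynomial.smul_eq_C_mul, mul_one]
      simp [h1, map_smul, Algebra.mul_smul_comm]
  | add f g hf hg =>
      simp only [map_add, hf, hg, mul_add, Finset.sum_add_distrib]
      ring
  | mul_X a i ih =>
      have hx : ∀ j : Fin n, pderiv j (a * X i) =
          pderiv j a * X i + a * (if j = i then 1 else 0) := by
        intro j; rw [pderiv_mul, pderiv_X]; simp [Pi.single_apply, eq_comm, mul_ite]
      rw [hD a (X i), ih]
      simp only [hx, map_add, map_mul]
      rw [Finset.sum_congr rfl (fun j _ => by
        rw [mul_add]
        : ∀ j ∈ univ, (D (X j) - D 1 * φ (X j)) * (φ (pderiv j a) * φ (X i) + φ a * φ (if j = i then 1 else 0)) = (D (X j) - D 1 * φ (X j)) * (φ (pderiv j a) * φ (X i)) + (D (X j) - D 1 * φ (X j)) * (φ a * φ (if j = i then 1 else 0)))]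
      rw [Finset.sum_add_distrib]
      have h2 : ∑ j, (D (X j) - D 1 * φ (X j)) * (φ a * φ (if j = i then (1:MvPolynomial (Fin n) K) else 0)) = (D (X i) - D 1 * φ (X i)) * φ a := by
        rw [Finset.sum_eq_single i]
        · simp
        · intro j _ hji; simp [hji]
        · simp
      rw [h2, add_mul, Finset.sum_mul]
      rw [Finset.sum_congr rfl (fun j _ => by ring : ∀ j ∈ univ, (D (X j) - D 1 * φ (X j)) * φ (pderiv j a) * φ (X i) = (D (X j) - D 1 * φ (X j)) * (φ (pderiv j a) * φ (X i)))]
      ring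

lemma antisym_sum {R : Type*} [CommRing R] {n : ℕ} (c : Fin n → Fin n → R) (u v : Fin n → R)
    (hc : ∀ i j, c j i = - c i j) (hc0 : ∀ i, c i i = 0) :
    ∑ i, ∑ j, c i j * (u i * v j) =
      ∑ i, ∑ j, if i < j then c i j * (u i * v j - v i * u j) else 0 := by
  have key : ∀ i j : Fin n, c i j * (u i * v j) =
      (if i < j then c i j * (u i * v j) else 0) +
      (if j < i then c i j * (u i * v j) else 0) +
      (if i = j then c i j * (u i * v j) else 0) := by
    intro i j
    rcases lt_trichotomy i j with h|h|h
    · simp [h, asymm h, ne_of_lt h]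
    · subst h; simp [lt_irrefl]
    · simp [h, asymm h, ne_of_gt h]
  calc ∑ i, ∑ j, c i j * (u i * v j)
      = ∑ i, ∑ j, ((if i < j then c i j * (u i * v j) else 0) +
          (if j < i then c i j * (u i * v j) else 0) +
          (if i = j then c i j * (u i * v j) else 0)) :=
        Finset.sum_congr rfl fun i _ => Finset.sum_congr rfl fun j _ => key i j
    _ = (∑ i, ∑ j, if i < j then c i j * (u i * v j) else 0) +
        (∑ i, ∑ j, if j < i then c i j * (u i * v j) else 0) +
        (∑ i, ∑ j, if i = j then c i j * (u i * v j) else 0) := by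
        simp [Finset.sum_add_distrib]
    _ = (∑ i, ∑ j, if i < j then c i j * (u i * v j) else 0) +
        (∑ i, ∑ j, if i < j then c j i * (u j * v i) else 0) + 0 := by
        congr 1
        · congr 1
          exact Finset.sum_comm
        · simp [Finset.sum_ite_eq, hc0]
    _ = ∑ i, ∑ j, if i < j then c i j * (u i * v j - v i * u j) else 0 := by
        rw [add_zero, ← Finset.sum_add_distrib]
        refine Finset.sum_congr rfl fun i _ => ?_
        rw [← Finset.sum_add_distrib]
        refine Finset.sum_congr rfl fun j _ => ?_
        by_cases h : i < j
        · simp only [if_pos h]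
          rw [hc i j]; ring
        · simp [h]

set_option synthInstance.maxHeartbeats 800000
set_option maxHeartbeats 800000

set_option maxHeartbeats 4000000 in
/-- over a field of characteristic `p > 2`, every anticommutative bracket
on the reduced polynomial algebra `O = K[x₁,…,xₙ]/(x₁^p,…,xₙ^p)` satisfying identity (★)
is of the form
`[a,b] = Σ_{i<j} f_{ij}(∂ᵢa ∂ⱼb − ∂ᵢb ∂ⱼa) + (Σᵢ fᵢ ∂ᵢa)·b − (Σᵢ fᵢ ∂ᵢb)·a`. -/
theorem stmt_15 (K : Type*) [Field K] (p : ℕ) [CharP K p] (hp : 2 < p) (n : ℕ)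
    (L : (MvPolynomial (Fin n) K ⧸
            Ideal.span (Set.range fun i : Fin n => (X i : MvPolynomial (Fin n) K) ^ p)) →ₗ[K]
         (MvPolynomial (Fin n) K ⧸
            Ideal.span (Set.range fun i : Fin n => (X i : MvPolynomial (Fin n) K) ^ p)) →ₗ[K]
         (MvPolynomial (Fin n) K ⧸
            Ideal.span (Set.range fun i : Fin n => (X i : MvPolynomial (Fin n) K) ^ p)))
    (hanti : ∀ a b, L a b = - L b a)
    (hstar : ∀ a b c, L (a * b) c = L a c * b + L b c * a - L 1 c * (a * b)) :
    ∃ (fij : Fin n → Fin n →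
        MvPolynomial (Fin n) K ⧸
          Ideal.span (Set.range fun i : Fin n => (X i : MvPolynomial (Fin n) K) ^ p))
      (fi : Fin n →
        MvPolynomial (Fin n) K ⧸
          Ideal.span (Set.range fun i : Fin n => (X i : MvPolynomial (Fin n) K) ^ p)),
      ∀ a b : MvPolynomial (Fin n) K,
        L (Ideal.Quotient.mk _ a) (Ideal.Quotient.mk _ b) =
          (∑ i, ∑ j, if i < j then
              fij i j *
                (Ideal.Quotient.mk _ (pderiv i a) * Ideal.Quotient.mk _ (pderiv j b) -
                 Ideal.Quotient.mk _ (pderiv i b) * Ideal.Quotient.mk _ (pderiv j a))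
            else 0) +
          (∑ i, fi i * Ideal.Quotient.mk _ (pderiv i a)) * Ideal.Quotient.mk _ b -
          (∑ i, fi i * Ideal.Quotient.mk _ (pderiv i b)) * Ideal.Quotient.mk _ a := by
  revert L
  set I : Ideal (MvPolynomial (Fin n) K) :=
    Ideal.span (Set.range fun i : Fin n => (X i : MvPolynomial (Fin n) K) ^ p) with hI
  intro L hanti hstar
  set φ : MvPolynomial (Fin n) K →ₐ[K] (MvPolynomial (Fin n) K ⧸ I) :=
    Ideal.Quotient.mkₐ K I with hφ
  -- basic consequences
  have h2K : (2 : K) ≠ 0 := by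
    intro h
    have := (CharP.cast_eq_zero_iff K p 2).mp (by exact_mod_cast h)
    have := Nat.le_of_dvd (by norm_num) this
    omega
  have self0 : ∀ x, L x x = 0 := by
    intro x
    have h := hanti x x
    have h2 : (2 : K) • L x x = 0 := by
      rw [two_smul]
      nth_rewrite 2 [h]
      simp
    rcases smul_eq_zero.mp h2 with h' | h'
    · exact absurd h' h2K
    · exact h'
  have star2 : ∀ u x y, L u (x * y) = L u x * y + L u y * x - L u 1 * (x * y) := by
    intro u x y
    rw [hanti u (x * y), hstar x y u, hanti x u, hanti y u, hanti 1 u]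
    ring
  have repr1 : ∀ (c) (a : MvPolynomial (Fin n) K),
      L (φ a) c = L 1 c * φ a + ∑ i, (L (φ (X i)) c - L 1 c * φ (X i)) * φ (pderiv i a) := by
    intro c a
    have hD : ∀ v w, ((L.flip c).comp φ.toLinearMap) (v * w) =
        ((L.flip c).comp φ.toLinearMap) v * φ w + ((L.flip c).comp φ.toLinearMap) w * φ v -
          ((L.flip c).comp φ.toLinearMap) 1 * φ (v * w) := by
      intro v w
      simp only [LinearMap.comp_apply, AlgHom.toLinearMap_apply, LinearMap.flip_apply,
        map_mul, map_one]
      exact hstar (φ v) (φ w) c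
    have h := deriv_repr φ ((L.flip c).comp φ.toLinearMap) hD a
    simpa only [LinearMap.comp_apply, AlgHom.toLinearMap_apply, LinearMap.flip_apply,
      map_one] using h
  have repr2 : ∀ (u) (b : MvPolynomial (Fin n) K),
      L u (φ b) = L u 1 * φ b + ∑ j, (L u (φ (X j)) - L u 1 * φ (X j)) * φ (pderiv j b) := by
    intro u b
    have hD : ∀ v w, ((L u).comp φ.toLinearMap) (v * w) =
        ((L u).comp φ.toLinearMap) v * φ w + ((L u).comp φ.toLinearMap) w * φ v -
          ((L u).comp φ.toLinearMap) 1 * φ (v * w) := by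
      intro v w
      simp only [LinearMap.comp_apply, AlgHom.toLinearMap_apply, map_mul, map_one]
      exact star2 u (φ v) (φ w)
    have h := deriv_repr φ ((L u).comp φ.toLinearMap) hD b
    simpa only [LinearMap.comp_apply, AlgHom.toLinearMap_apply, map_one] using h
  have h11 : L 1 (1 : MvPolynomial (Fin n) K ⧸ I) = 0 := self0 1
  have hB1 : ∀ b : MvPolynomial (Fin n) K,
      L (φ b) 1 = ∑ j, L (φ (X j)) 1 * φ (pderiv j b) := by
    intro b
    rw [repr1 1 b, h11]
    simp
  have h1B : ∀ b : MvPolynomial (Fin n) K,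
      L 1 (φ b) = -∑ j, L (φ (X j)) 1 * φ (pderiv j b) := by
    intro b
    rw [hanti 1 (φ b), hB1 b]
  refine ⟨fun i j => L (φ (X i)) (φ (X j)) + L (φ (X j)) 1 * φ (X i) - L (φ (X i)) 1 * φ (X j),
    fun i => L (φ (X i)) 1, ?_⟩
  intro a b
  have hmk : ∀ x : MvPolynomial (Fin n) K, Ideal.Quotient.mk I x = φ x := fun _ => rfl
  simp only [hmk]
  have stepA : L (φ a) (φ b) =
      (-∑ j, L (φ (X j)) 1 * φ (pderiv j b)) * φ a +
      ∑ i, (L (φ (X i)) 1 * φ b +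
            ∑ j, (L (φ (X i)) (φ (X j)) - L (φ (X i)) 1 * φ (X j)) * φ (pderiv j b) +
            (∑ j, L (φ (X j)) 1 * φ (pderiv j b)) * φ (X i)) * φ (pderiv i a) := by
    rw [repr1 (φ b) a, h1B b]
    congr 1
    refine Finset.sum_congr rfl fun i _ => ?_
    rw [repr2 (φ (X i)) b]
    ring
  have stepB : ∀ i, (L (φ (X i)) 1 * φ b +
            ∑ j, (L (φ (X i)) (φ (X j)) - L (φ (X i)) 1 * φ (X j)) * φ (pderiv j b) +
            (∑ j, L (φ (X j)) 1 * φ (pderiv j b)) * φ (X i)) * φ (pderiv i a) =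
      (L (φ (X i)) 1 * φ (pderiv i a)) * φ b +
      ∑ j, (L (φ (X i)) (φ (X j)) + L (φ (X j)) 1 * φ (X i) - L (φ (X i)) 1 * φ (X j)) *
        (φ (pderiv i a) * φ (pderiv j b)) := by
    intro i
    rw [Finset.sum_mul (f := fun j => L (φ (X j)) 1 * φ (pderiv j b)), add_assoc,
      ← Finset.sum_add_distrib, add_mul, Finset.sum_mul]
    congr 1
    · ring
    refine Finset.sum_congr rfl fun j _ => ?_
    ring
  have stepC : L (φ a) (φ b) =
      (∑ i, ∑ j, (L (φ (X i)) (φ (X j)) + L (φ (X j)) 1 * φ (X i) - L (φ (X i)) 1 * φ (X j)) *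
        (φ (pderiv i a) * φ (pderiv j b))) +
      (∑ i, L (φ (X i)) 1 * φ (pderiv i a)) * φ b -
      (∑ i, L (φ (X i)) 1 * φ (pderiv i b)) * φ a := by
    rw [stepA, Finset.sum_congr rfl fun i _ => stepB i, Finset.sum_add_distrib,
      ← Finset.sum_mul]
    ring
  have hc : ∀ i j : Fin n,
      L (φ (X j)) (φ (X i)) + L (φ (X i)) 1 * φ (X j) - L (φ (X j)) 1 * φ (X i) =
      -(L (φ (X i)) (φ (X j)) + L (φ (X j)) 1 * φ (X i) - L (φ (X i)) 1 * φ (X j)) := by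
    intro i j
    rw [hanti (φ (X j)) (φ (X i))]; ring
  have hc0 : ∀ i : Fin n,
      L (φ (X i)) (φ (X i)) + L (φ (X i)) 1 * φ (X i) - L (φ (X i)) 1 * φ (X i) = 0 := by
    intro i
    rw [self0]; ring
  have stepD := antisym_sum
    (fun i j => L (φ (X i)) (φ (X j)) + L (φ (X j)) 1 * φ (X i) - L (φ (X i)) 1 * φ (X j))
    (fun i => φ (pderiv i a)) (fun j => φ (pderiv j b)) hc hc0
  rw [stepC, stepD]
end

section
/- Let K be a field of characteristic ≠ 2, and let A and B be commutative associative unital K-algebras equipped with brackets [·,·]_A and [·,·]_B, each satisfying the contact identity [ab,c] = [a,c]b + [b,c]a + [c,1]ab on A and on B respectively. Then the bracket on A ⊗ B defined by [a⊗b, a'⊗b'] = [a,a']_A ⊗ bb' + aa' ⊗ [b,b']_B also satisfies the contact identity [uv,w] = [u,w]v + [v,w]u + [w,1]uv for all u,v,w ∈ A ⊗ B. -/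
open scoped TensorProduct

/-- if brackets on `A` and on `B` both satisfy the contact identity
`[ab,c] = [a,c]b + [b,c]a + [c,1]ab`, then the bracket
`[a⊗b, a'⊗b'] = [a,a']_A ⊗ bb' + aa' ⊗ [b,b']_B` on `A ⊗ B` also satisfies it. -/
theorem stmt_18 (K : Type*) [Field K] (h2 : (2 : K) ≠ 0)
    (A B : Type*) [CommRing A] [Algebra K A] [CommRing B] [Algebra K B]
    (LA : A →ₗ[K] A →ₗ[K] A) (LB : B →ₗ[K] B →ₗ[K] B)
    (hA : ∀ a b c : A, LA (a * b) c = LA a c * b + LA b c * a + LA c 1 * (a * b))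
    (hB : ∀ a b c : B, LB (a * b) c = LB a c * b + LB b c * a + LB c 1 * (a * b))
    (L : (A ⊗[K] B) →ₗ[K] (A ⊗[K] B) →ₗ[K] (A ⊗[K] B))
    (hL : ∀ (a a' : A) (b b' : B),
      L (a ⊗ₜ[K] b) (a' ⊗ₜ[K] b') =
        LA a a' ⊗ₜ[K] (b * b') + (a * a') ⊗ₜ[K] LB b b') :
    ∀ u v w : A ⊗[K] B, L (u * v) w = L u w * v + L v w * u + L w 1 * (u * v) := by
  intro u v w
  induction u using TensorProduct.induction_on with
  | zero => simp
  | add x y hx hy =>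
    simp only [add_mul, map_add, LinearMap.add_apply, mul_add] at *
    rw [hx, hy]; ring
  | tmul a b =>
    induction v using TensorProduct.induction_on with
    | zero => simp
    | add x y hx hy =>
      simp only [mul_add, map_add, LinearMap.add_apply, add_mul] at *
      rw [hx, hy]; ring
    | tmul a' b' =>
      induction w using TensorProduct.induction_on with
      | zero => simp
      | add x y hx hy =>
        simp only [map_add, LinearMap.add_apply, add_mul] at *
        rw [hx, hy]; ring
      | tmul c d =>
        show L (a ⊗ₜ[K] b * a' ⊗ₜ[K] b') (c ⊗ₜ[K] d) = _
        rw [Algebra.TensorProduct.tmul_mul_tmul, hL]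
        rw [show (1 : A ⊗[K] B) = (1:A) ⊗ₜ[K] (1:B) from rfl]
        rw [hL, hL, hL, hA, hB]
        simp only [Algebra.TensorProduct.tmul_mul_tmul, TensorProduct.add_tmul, TensorProduct.tmul_add,
          add_mul, mul_add, mul_one]
        ring_nf
end
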